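/- arXiv:1411.5751 — 5 statements merged into one kernel-verified Lean document; each statement's English description precedes it below -/
import Mathlib

section
/- For every integer n ≥ 1, the expected length of the first block satisfies E[D_{n,1}] = 2^{2n} / C(2n, n), where C(2n,n) is the central binomial coefficient. Equivalently, ∑_{M} min{ p : M(p) < p } = (2n−1)!! · 4^n / C(2n,n), the sum being over all fixed-point-free involutions M of {1,…,2n}. -/
open Finset MeasureTheory ProbabilityTheory Filter Real

/-- The set of fixed-point-free involutions (perfect matchings) of `{1,…,2n}`,
modeled as permutations of `Fin (2*n)`. -/
def Matchings (n : ℕ) : Finset (Equiv.Perm (Fin (2 * n))) :=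
  Finset.univ.filter (fun M => (∀ p, M (M p) = p) ∧ ∀ p, M p ≠ p)

open scoped Classical in
/-- Probability of an event under the uniform measure on perfect matchings. -/
noncomputable def Pr (n : ℕ) (E : Equiv.Perm (Fin (2 * n)) → Prop) : ℝ :=
  (((Matchings n).filter E).card : ℝ) / ((Matchings n).card : ℝ)

/-- Expectation of a real random variable under the uniform measure on matchings. -/
noncomputable def Ex (n : ℕ) (X : Equiv.Perm (Fin (2 * n)) → ℝ) : ℝ :=
  (∑ M ∈ Matchings n, X M) / ((Matchings n).card : ℝ)

/-- The right endpoints of a matching: points `p` with `M p < p`. -/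
def rightEndpoints (n : ℕ) (M : Equiv.Perm (Fin (2 * n))) : Finset (Fin (2 * n)) :=
  Finset.univ.filter (fun p => M p < p)

/-- `0` followed by the (1-based) positions of the right endpoints, in increasing order. -/
def rePos (n : ℕ) (M : Equiv.Perm (Fin (2 * n))) : List ℕ :=
  0 :: (((rightEndpoints n M).sort (· ≤ ·)).map (fun p => (p : ℕ) + 1))

/-- The length `D_{n,k}` of the `k`-th block: `r_k - r_{k-1}` (with `r_0 = 0`). -/
def D (n : ℕ) (M : Equiv.Perm (Fin (2 * n))) (k : ℕ) : ℕ :=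
  (rePos n M).getD k 0 - (rePos n M).getD (k - 1) 0

/-- `B_{n,i}`: the number of blocks of length `i`. -/
def B (n : ℕ) (M : Equiv.Perm (Fin (2 * n))) (i : ℕ) : ℕ :=
  ((Finset.Icc 1 n).filter (fun k => D n M k = i)).card

/-- `Y_n`: the number of blocks of even length. -/
def Y (n : ℕ) (M : Equiv.Perm (Fin (2 * n))) : ℕ :=
  ∑ i ∈ Finset.Icc 1 n, B n M (2 * i)

/-- The recursively defined "good position" predicate (0-based version of `f`):
`f(1) = true` and `f(p+1)` is true iff `f(p)` is false or position `p` is a right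
endpoint. -/
def good (n : ℕ) (M : Equiv.Perm (Fin (2 * n))) : ℕ → Bool
  | 0 => true
  | q + 1 =>
      !(good n M q) || (if h : q < 2 * n then decide ((M ⟨q, h⟩ : ℕ) < q) else false)

open scoped Classical in
/-- `L_n`: the number of lucky moves. -/
noncomputable def lucky (n : ℕ) (M : Equiv.Perm (Fin (2 * n))) : ℕ :=
  ((Finset.range (2 * n - 1)).filter (fun q =>
    good n M q = true ∧
      (if h : q < 2 * n then ((M ⟨q, h⟩ : ℕ) = q + 1) else False))).card

namespace FB
open Equiv
open scoped Nat


def upF (m j : ℕ) (k : Fin m) : Fin (m + 2) :=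
  if (k : ℕ) + 1 < j then ⟨(k : ℕ) + 1, by have := k.isLt; omega⟩
  else ⟨(k : ℕ) + 2, by have := k.isLt; omega⟩

def downF (m j : ℕ) (hm : 0 < m) (x : Fin (m + 2)) : Fin m :=
  if (x : ℕ) < j then ⟨min ((x : ℕ) - 1) (m - 1), by omega⟩
  else ⟨min ((x : ℕ) - 2) (m - 1), by omega⟩

theorem upF_val (m j : ℕ) (k : Fin m) :
    (((upF m j k : ℕ) = (k : ℕ) + 1 ∧ (k : ℕ) + 1 < j) ∨
      ((upF m j k : ℕ) = (k : ℕ) + 2 ∧ ¬ ((k : ℕ) + 1 < j))) := by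
  unfold upF; split <;> simp_all

theorem upF_ne_zero (m j : ℕ) (k : Fin m) : (upF m j k : ℕ) ≠ 0 := by
  rcases upF_val m j k with ⟨h, _⟩ | ⟨h, _⟩ <;> omega

theorem upF_ne_j (m j : ℕ) (k : Fin m) : (upF m j k : ℕ) ≠ j := by
  rcases upF_val m j k with ⟨h, _⟩ | ⟨h, _⟩ <;> omega

theorem upF_ge (m j : ℕ) (k : Fin m) : (k : ℕ) + 1 ≤ (upF m j k : ℕ) := by
  rcases upF_val m j k with ⟨h, _⟩ | ⟨h, _⟩ <;> omega

theorem downF_val (m j : ℕ) (hm : 0 < m) (x : Fin (m + 2)) (hj : j ≤ m + 1)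
    (hx0 : (x : ℕ) ≠ 0) (hxj : (x : ℕ) ≠ j) :
    (((downF m j hm x : ℕ) = (x : ℕ) - 1 ∧ (x : ℕ) < j) ∨
      ((downF m j hm x : ℕ) = (x : ℕ) - 2 ∧ j < (x : ℕ))) := by
  have hx := x.isLt
  unfold downF; split <;> simp_all <;> omega

theorem down_up (m j : ℕ) (hm : 0 < m) (k : Fin m) :
    downF m j hm (upF m j k) = k := by
  have hk := k.isLt
  rcases upF_val m j k with ⟨h, hb⟩ | ⟨h, hb⟩ <;>
  · apply Fin.ext
    unfold downF
    split <;> simp_all <;> omega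

theorem up_down (m j : ℕ) (hm : 0 < m) (x : Fin (m + 2))
    (hx0 : (x : ℕ) ≠ 0) (hxj : (x : ℕ) ≠ j) (hj0 : j ≠ 0) (hj : j ≤ m + 1) :
    upF m j (downF m j hm x) = x := by
  have hx := x.isLt
  apply Fin.ext
  unfold downF
  split
  · rcases upF_val m j ⟨min ((x : ℕ) - 1) (m - 1), by omega⟩ with ⟨h, hb⟩ | ⟨h, hb⟩ <;>
      simp only [Fin.val_mk] at h hb ⊢ <;> omega
  · rcases upF_val m j ⟨min ((x : ℕ) - 2) (m - 1), by omega⟩ with ⟨h, hb⟩ | ⟨h, hb⟩ <;>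
      simp_all <;> omega

/-- matchings of `Fin m` whose first `p` positions are left endpoints -/
def Am (m p : ℕ) : Finset (Perm (Fin m)) :=
  univ.filter (fun M => (∀ x, M (M x) = x) ∧ (∀ x, M x ≠ x) ∧
    ∀ x : Fin m, (x : ℕ) < p → (x : ℕ) < (M x : ℕ))

theorem mem_Am {m p : ℕ} {M : Perm (Fin m)} :
    M ∈ Am m p ↔ ((∀ x, M (M x) = x) ∧ (∀ x, M x ≠ x) ∧
      ∀ x : Fin m, (x : ℕ) < p → (x : ℕ) < (M x : ℕ)) := by
  simp [Am]

section Bij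
variable {m p : ℕ} (M : Perm (Fin (m + 2)))

/-- the raw downward map -/
def FF (M : Perm (Fin (m + 2))) : Fin m → Fin m := fun k =>
  downF m (M 0 : ℕ) k.pos (M (upF m (M 0 : ℕ) k))

variable (hinv : ∀ x, M (M x) = x) (hfpf : ∀ x, M x ≠ x)

include hinv hfpf

theorem Mzero_ne : (M 0 : ℕ) ≠ 0 := by
  intro h
  exact hfpf 0 (Fin.ext h)

theorem compl_stable (x : Fin (m + 2)) (hx0 : (x : ℕ) ≠ 0) (hxj : (x : ℕ) ≠ (M 0 : ℕ)) :
    (M x : ℕ) ≠ 0 ∧ (M x : ℕ) ≠ (M 0 : ℕ) := by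
  constructor
  · intro h
    have : M x = 0 := Fin.ext h
    have := congrArg M this
    rw [hinv] at this
    exact hxj (by rw [this])
  · intro h
    have : M x = M 0 := Fin.ext h
    have := M.injective this
    exact hx0 (by rw [this]; rfl)

theorem FF_invol : Function.Involutive (FF M) := by
  intro k
  have hm := k.pos
  set j := (M 0 : ℕ) with hj
  have hj0 : j ≠ 0 := Mzero_ne M hinv hfpf
  have hjle : j ≤ m + 1 := by have := (M 0).isLt; omega
  have hu0 := upF_ne_zero m j k
  have huj := upF_ne_j m j k
  have hy := compl_stable M hinv hfpf (upF m j k) hu0 huj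
  show downF m j _ (M (upF m j (downF m j k.pos (M (upF m j k))))) = k
  rw [up_down m j k.pos (M (upF m j k)) hy.1 hy.2 hj0 hjle, hinv, down_up]

/-- the downward permutation -/
def Fperm : Perm (Fin m) := Function.Involutive.toPerm _ (FF_invol M hinv hfpf)

theorem Fperm_apply (k : Fin m) : Fperm M hinv hfpf k = FF M k := rfl

end Bij

section BijG
variable {m : ℕ} (j : Fin (m + 2)) (M' : Perm (Fin m))

/-- the raw upward map -/
def GG : Fin (m + 2) → Fin (m + 2) := fun x =>
  if x = 0 then j else if x = j then 0
  else if hm : 0 < m then upF m (j : ℕ) (M' (downF m (j : ℕ) hm x)) else x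

variable (hj0 : j ≠ 0) (hinv' : ∀ k, M' (M' k) = k)

include hj0

theorem GG_ne_cases (x : Fin (m + 2)) (hx0 : x ≠ 0) (hxj : x ≠ j) :
    ∃ hm : 0 < m, GG j M' x = upF m (j : ℕ) (M' (downF m (j : ℕ) hm x)) := by
  have hjv : (j : ℕ) ≠ 0 := fun h => hj0 (Fin.ext h)
  have hxv : (x : ℕ) ≠ 0 := fun h => hx0 (Fin.ext h)
  have hxjv : (x : ℕ) ≠ (j : ℕ) := fun h => hxj (Fin.ext h)
  have hx := x.isLt
  have hjlt := j.isLt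
  have hm : 0 < m := by omega
  exact ⟨hm, by simp [GG, hx0, hxj, hm]⟩

include hinv'

theorem GG_invol : Function.Involutive (GG j M') := by
  intro x
  have hjv : (j : ℕ) ≠ 0 := fun h => hj0 (Fin.ext h)
  have hjle : (j : ℕ) ≤ m + 1 := by have := j.isLt; omega
  by_cases hx0 : x = 0
  · subst hx0
    simp only [GG, if_pos rfl]
    by_cases hjj : j = 0
    · exact absurd hjj hj0
    · simp [hjj]
  by_cases hxj : x = j
  · subst hxj
    simp [GG, hj0, hx0]
  · obtain ⟨hm, hGx⟩ := GG_ne_cases j M' hj0 x hx0 hxj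
    rw [hGx]
    set z := upF m (j : ℕ) (M' (downF m (j : ℕ) hm x)) with hz
    have hz0 : z ≠ 0 := fun h => upF_ne_zero m (j : ℕ) (M' (downF m (j : ℕ) hm x))
      (by rw [← hz, h]; rfl)
    have hzj : z ≠ j := fun h => upF_ne_j m (j : ℕ) (M' (downF m (j : ℕ) hm x))
      (by rw [← hz, h])
    obtain ⟨hm2, hGz⟩ := GG_ne_cases j M' hj0 z hz0 hzj
    rw [hGz, hz, down_up, hinv', up_down m (j:ℕ) _ x
      (fun h => hx0 (Fin.ext h)) (fun h => hxj (Fin.ext h)) hjv hjle]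

/-- the upward permutation -/
def Gperm : Perm (Fin (m + 2)) := Function.Involutive.toPerm _ (GG_invol j M' hj0 hinv')

theorem Gperm_apply (x : Fin (m + 2)) : Gperm j M' hj0 hinv' x = GG j M' x := rfl

end BijG


section Main
variable {m p : ℕ}

open scoped Classical in
/-- total version of `Fperm` -/
noncomputable def FP (M : Perm (Fin (m + 2))) : Perm (Fin m) :=
  if h : Function.Involutive (FF M) then h.toPerm _ else 1

open scoped Classical in
/-- total version of `Gperm` -/
noncomputable def GP (b : Fin (m + 2) × Perm (Fin m)) : Perm (Fin (m + 2)) :=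
  if h : Function.Involutive (GG b.1 b.2) then h.toPerm _ else 1

theorem FP_apply {M : Perm (Fin (m + 2))} (h : Function.Involutive (FF M)) (k : Fin m) :
    FP M k = FF M k := by
  unfold FP
  rw [dif_pos h]
  rfl

theorem GP_apply {b : Fin (m + 2) × Perm (Fin m)} (h : Function.Involutive (GG b.1 b.2))
    (x : Fin (m + 2)) : GP b x = GG b.1 b.2 x := by
  unfold GP
  rw [dif_pos h]
  rfl

theorem upF_val_of_lt {j : ℕ} {k : Fin m} (h : (k : ℕ) + 1 < j) :
    (upF m j k : ℕ) = (k : ℕ) + 1 := by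
  rcases upF_val m j k with ⟨h', _⟩ | ⟨h', hb⟩
  · exact h'
  · omega

theorem GG_zero (j : Fin (m + 2)) (M' : Perm (Fin m)) : GG j M' 0 = j := by simp [GG]

theorem GG_j (j : Fin (m + 2)) (M' : Perm (Fin m)) (hj0 : j ≠ 0) : GG j M' j = 0 := by
  simp [GG, hj0]

theorem Mzero_gt {M : Perm (Fin (m + 2))} (hM : M ∈ Am (m + 2) (p + 1)) :
    p < (M 0 : ℕ) := by
  obtain ⟨hinv, hfpf, hleft⟩ := mem_Am.1 hM
  by_contra hle
  push_neg at hle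
  have hj0 : (M 0 : ℕ) ≠ 0 := Mzero_ne M hinv hfpf
  have := hleft (M 0) (by omega)
  rw [hinv] at this
  simp at this

theorem FP_mem {M : Perm (Fin (m + 2))} (hM : M ∈ Am (m + 2) (p + 1)) :
    FP M ∈ Am m p := by
  obtain ⟨hinv, hfpf, hleft⟩ := mem_Am.1 hM
  have hjp : p < (M 0 : ℕ) := Mzero_gt hM
  have hjle : (M 0 : ℕ) ≤ m + 1 := by have := (M 0).isLt; omega
  have hj0 : (M 0 : ℕ) ≠ 0 := Mzero_ne M hinv hfpf
  have hInv := FF_invol M hinv hfpf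
  rw [mem_Am]
  refine ⟨fun k => by rw [FP_apply hInv, FP_apply hInv]; exact hInv k, ?_, ?_⟩
  · -- fixed-point free
    intro k hk
    rw [FP_apply hInv] at hk
    have hm := k.pos
    have hu0 := upF_ne_zero m (M 0 : ℕ) k
    have huj := upF_ne_j m (M 0 : ℕ) k
    have hy := compl_stable M hinv hfpf _ hu0 huj
    have hk' : downF m (M 0 : ℕ) k.pos (M (upF m (M 0 : ℕ) k)) = k := hk
    have h2 := congrArg (upF m (M 0 : ℕ)) hk'
    rw [up_down m (M 0 : ℕ) k.pos _ hy.1 hy.2 hj0 hjle] at h2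
    exact hfpf _ h2
  · -- left endpoints
    intro k hkp
    rw [FP_apply hInv]
    have hm := k.pos
    have hku : (upF m (M 0 : ℕ) k : ℕ) = (k : ℕ) + 1 := upF_val_of_lt (by omega)
    have hyl := hleft (upF m (M 0 : ℕ) k) (by omega)
    have hu0 := upF_ne_zero m (M 0 : ℕ) k
    have huj := upF_ne_j m (M 0 : ℕ) k
    have hy := compl_stable M hinv hfpf _ hu0 huj
    show (k : ℕ) < (downF m (M 0 : ℕ) k.pos (M (upF m (M 0 : ℕ) k)) : ℕ)
    rcases downF_val m (M 0 : ℕ) k.pos (M (upF m (M 0 : ℕ) k)) hjle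
      (by omega) (by exact_mod_cast hy.2) with ⟨hd, hlt⟩ | ⟨hd, hlt⟩ <;> omega

theorem GP_mem {b : Fin (m + 2) × Perm (Fin m)} (hb1 : p < (b.1 : ℕ)) (hb2 : b.2 ∈ Am m p) :
    GP b ∈ Am (m + 2) (p + 1) := by
  obtain ⟨j, M'⟩ := b
  simp only at hb1 hb2 ⊢
  obtain ⟨hinv', hfpf', hleft'⟩ := mem_Am.1 hb2
  have hj0 : j ≠ 0 := by
    intro h; rw [h] at hb1; simp at hb1
  have hjv0 : (j : ℕ) ≠ 0 := fun h => hj0 (Fin.ext h)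
  have hjle : (j : ℕ) ≤ m + 1 := by have := j.isLt; omega
  have hInv := GG_invol j M' hj0 hinv'
  rw [mem_Am]
  refine ⟨fun x => by rw [GP_apply hInv, GP_apply hInv]; exact hInv x, ?_, ?_⟩
  · -- fpf
    intro x hx
    rw [GP_apply hInv] at hx
    by_cases hx0 : x = 0
    · subst hx0; rw [GG_zero] at hx; exact hj0 hx
    by_cases hxj : x = j
    · rw [hxj, GG_j j M' hj0] at hx; exact hj0 hx.symm
    · obtain ⟨hm, hGx⟩ := GG_ne_cases j M' hj0 x hx0 hxj
      rw [hGx] at hx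
      have := congrArg (downF m (j : ℕ) hm) hx
      rw [down_up] at this
      exact hfpf' _ this
  · -- left endpoints
    intro x hxp
    rw [GP_apply hInv]
    by_cases hx0 : x = 0
    · subst hx0; rw [GG_zero]; simp; omega
    · have hxv0 : (x : ℕ) ≠ 0 := fun h => hx0 (Fin.ext h)
      have hxj : x ≠ j := by
        intro h; rw [h] at hxp; omega
      obtain ⟨hm, hGx⟩ := GG_ne_cases j M' hj0 x hx0 hxj
      rw [hGx]
      rcases downF_val m (j : ℕ) hm x hjle hxv0 (fun h => hxj (Fin.ext h)) with
        ⟨hd, hlt⟩ | ⟨hd, hlt⟩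
      · have hl := hleft' (downF m (j : ℕ) hm x) (by omega)
        have := upF_ge m (j : ℕ) (M' (downF m (j : ℕ) hm x))
        omega
      · omega

theorem left_inv_lemma {M : Perm (Fin (m + 2))} (hM : M ∈ Am (m + 2) (p + 1)) :
    GP (M 0, FP M) = M := by
  obtain ⟨hinv, hfpf, hleft⟩ := mem_Am.1 hM
  have hjp : p < (M 0 : ℕ) := Mzero_gt hM
  have hj0 : M 0 ≠ 0 := fun h => Mzero_ne M hinv hfpf (by rw [h]; rfl)
  have hjv0 : (M 0 : ℕ) ≠ 0 := Mzero_ne M hinv hfpf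
  have hjle : (M 0 : ℕ) ≤ m + 1 := by have := (M 0).isLt; omega
  have hFInv := FF_invol M hinv hfpf
  have hinv' : ∀ k, FP M (FP M k) = k := fun k => by
    rw [FP_apply hFInv, FP_apply hFInv]; exact hFInv k
  have hGInv : Function.Involutive (GG (M 0) (FP M)) := GG_invol (M 0) (FP M) hj0 hinv'
  apply Equiv.ext
  intro x
  rw [show GP (M 0, FP M) x = GG (M 0) (FP M) x from GP_apply hGInv x]
  by_cases hx0 : x = 0
  · rw [hx0, GG_zero]
  by_cases hxj : x = M 0
  · rw [hxj, GG_j _ _ hj0]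
    exact (hinv 0).symm
  · obtain ⟨hm, hGx⟩ := GG_ne_cases (M 0) (FP M) hj0 x hx0 hxj
    rw [hGx, FP_apply hFInv]
    have hxv0 : (x : ℕ) ≠ 0 := fun h => hx0 (Fin.ext h)
    have hxvj : (x : ℕ) ≠ (M 0 : ℕ) := fun h => hxj (Fin.ext h)
    have hy := compl_stable M hinv hfpf x hxv0 hxvj
    show upF m (M 0 : ℕ)
      (downF m (M 0 : ℕ) _ (M (upF m (M 0 : ℕ) (downF m (M 0 : ℕ) hm x)))) = M x
    rw [up_down m (M 0 : ℕ) hm x hxv0 hxvj hjv0 hjle]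
    exact up_down m (M 0 : ℕ) _ (M x) hy.1 hy.2 hjv0 hjle

theorem right_inv_lemma {b : Fin (m + 2) × Perm (Fin m)} (hb1 : p < (b.1 : ℕ))
    (hb2 : b.2 ∈ Am m p) : (GP b 0, FP (GP b)) = b := by
  obtain ⟨j, M'⟩ := b
  simp only at hb1 hb2 ⊢
  obtain ⟨hinv', hfpf', hleft'⟩ := mem_Am.1 hb2
  have hj0 : j ≠ 0 := by intro h; rw [h] at hb1; simp at hb1
  have hjv0 : (j : ℕ) ≠ 0 := fun h => hj0 (Fin.ext h)
  have hjle : (j : ℕ) ≤ m + 1 := by have := j.isLt; omega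
  have hGInv := GG_invol j M' hj0 hinv'
  have hG0 : GP (j, M') 0 = j := by rw [GP_apply hGInv]; exact GG_zero j M'
  obtain ⟨hinvG, hfpfG, hleftG⟩ := mem_Am.1 (GP_mem (p := p) (b := (j, M')) hb1 hb2)
  have hFInv := FF_invol (GP (j, M')) hinvG hfpfG
  refine Prod.ext hG0 ?_
  apply Equiv.ext
  intro k
  simp only
  rw [FP_apply hFInv]
  show downF m (GP (j, M') 0 : ℕ) k.pos (GP (j, M') (upF m (GP (j, M') 0 : ℕ) k)) = M' k
  rw [hG0]
  have hu0 : upF m (j : ℕ) k ≠ 0 := fun h => upF_ne_zero m (j : ℕ) k (by rw [h]; rfl)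
  have huj : upF m (j : ℕ) k ≠ j := fun h => upF_ne_j m (j : ℕ) k (by rw [h])
  obtain ⟨hm, hGu⟩ := GG_ne_cases j M' hj0 (upF m (j : ℕ) k) hu0 huj
  rw [GP_apply hGInv, hGu, down_up, down_up]

theorem card_Am_succ (m p : ℕ) (hp : p ≤ m) :
    (Am (m + 2) (p + 1)).card = (m + 1 - p) * (Am m p).card := by
  classical
  have hTcard : ((univ.filter fun j : Fin (m + 2) => p < (j : ℕ)) ×ˢ Am m p).card
      = (m + 1 - p) * (Am m p).card := by
    rw [card_product]
    congr 1
    have he : (univ.filter fun j : Fin (m + 2) => p < (j : ℕ))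
        = Ioi (⟨p, by omega⟩ : Fin (m + 2)) := by
      ext x
      simp [Fin.lt_def]
    rw [he, Fin.card_Ioi]
    simp
  rw [← hTcard]
  apply card_nbij' (fun M => (M 0, FP M)) (fun b => GP b)
  · intro M hM
    rw [mem_coe, mem_product, mem_filter]
    exact ⟨⟨mem_univ _, Mzero_gt hM⟩, FP_mem hM⟩
  · intro b hb
    rw [mem_coe, mem_product, mem_filter] at hb
    exact GP_mem hb.1.2 hb.2
  · intro M hM
    exact left_inv_lemma hM
  · intro b hb
    rw [mem_coe, mem_product, mem_filter] at hb
    exact right_inv_lemma hb.1.2 hb.2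


theorem Am_zero_eq_Am_one (m : ℕ) : Am m 0 = Am m 1 := by
  ext M
  simp only [mem_Am]
  constructor
  · rintro ⟨h1, h2, _⟩
    refine ⟨h1, h2, fun x hx => ?_⟩
    by_contra h
    push_neg at h
    exact h2 x (Fin.ext (by omega))
  · rintro ⟨h1, h2, _⟩
    exact ⟨h1, h2, fun x hx => absurd hx (by omega)⟩

theorem card_Am_matchings (m : ℕ) : (Am (2 * m) 0).card = Nat.doubleFactorial (2 * m - 1) := by
  induction m with
  | zero =>
      have h : Am 0 0 = univ := by
        ext M
        simp only [mem_Am, mem_univ, iff_true]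
        exact ⟨fun x => x.elim0, fun x => x.elim0, fun x => x.elim0⟩
      rw [show (2 * 0) = 0 from rfl, h, card_univ]
      simp
  | succ k ih =>
      have h2 : 2 * (k + 1) = 2 * k + 2 := by ring
      rw [h2, Am_zero_eq_Am_one, card_Am_succ (2 * k) 0 (by omega), ih]
      simp only [Nat.sub_zero]
      cases k with
      | zero => simp [Nat.doubleFactorial]
      | succ l =>
          have e1 : 2 * (l + 1) + 1 = 2 * l + 1 + 2 := by omega
          have e2 : 2 * (l + 1) - 1 = 2 * l + 1 := by omega
          have e3 : 2 * (l + 1) + 2 - 1 = 2 * l + 1 + 2 := by omega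
          rw [e1, e2, e3]
          exact (Nat.doubleFactorial_add_two _).symm

open scoped Classical in
theorem Am_eq_empty (m p : ℕ) (hpm : p ≤ m) (h : m < 2 * p) : Am m p = ∅ := by
  rw [eq_empty_iff_forall_notMem]
  intro M hM
  obtain ⟨hinv, hfpf, hleft⟩ := mem_Am.1 hM
  set s := univ.filter (fun i : Fin m => (i : ℕ) < p) with hsdef
  set t := univ.filter (fun i : Fin m => ¬ ((i : ℕ) < p)) with htdef
  have hst : s.card + t.card = m := by
    rw [hsdef, htdef, card_filter_add_card_filter_not, card_univ]
    simp
  have hs : s.card = p := by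
    have hh : ∀ a ∈ Finset.range p, a < m := fun a ha => by
      rw [mem_range] at ha; omega
    have : s = (Finset.range p).attachFin hh := by
      ext i
      simp [hsdef, mem_attachFin, mem_range]
    rw [this, card_attachFin, card_range]
  have hmap : ∀ i ∈ s, M i ∈ t := by
    intro i hi
    simp only [hsdef, htdef, mem_filter, mem_univ, true_and] at hi ⊢
    intro hMi
    have h1 := hleft i hi
    have h2 := hleft (M i) hMi
    rw [hinv] at h2
    omega
  have hinj : Set.InjOn M s := fun a _ b _ hab => M.injective hab
  have hle := Finset.card_le_card_of_injOn M hmap hinj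
  omega

theorem card_Am_formula : ∀ (p n : ℕ), p ≤ n →
    (Am (2 * n) p).card = (2 * n - p).descFactorial p * Nat.doubleFactorial (2 * (n - p) - 1) := by
  intro p
  induction p with
  | zero => intro n _; simpa using card_Am_matchings n
  | succ q ih =>
      intro n hn
      have h2 : 2 * n = (2 * (n - 1)) + 2 := by omega
      rw [h2, card_Am_succ (2 * (n - 1)) q (by omega), ih (n - 1) (by omega)]
      obtain ⟨a, ha⟩ : ∃ a, 2 * (n - 1) + 2 - (q + 1) = a + 1 := ⟨2 * n - q - 2, by omega⟩
      rw [ha, Nat.succ_descFactorial_succ]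
      have e2 : 2 * (n - 1) + 1 - q = a + 1 := by omega
      have e3 : 2 * (n - 1) - q = a := by omega
      have e4 : (n - 1) - q = n - (q + 1) := by omega
      rw [e2, e3, e4]
      ring

theorem sum_U (n : ℕ) :
    ∑ j ∈ Finset.range (n + 1), 2 ^ (n - j) * (n + j).choose j = 4 ^ n := by
  induction n with
  | zero => simp
  | succ n ih =>
      set X := ∑ j ∈ Finset.range (n + 2), 2 ^ (n + 1 - j) * (n + 1 + j).choose j with hX
      set S2 := ∑ i ∈ Finset.range (n + 1), 2 ^ (n - i) * (n + 1 + i).choose i with hS2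
      set Q := ∑ i ∈ Finset.range (n + 1), 2 ^ (n - i) * (n + 1 + i).choose (i + 1) with hQ
      have E2 : X = 2 * S2 + (2 * n + 2).choose (n + 1) := by
        rw [hX, Finset.sum_range_succ]
        have h1 : ∑ j ∈ Finset.range (n + 1), 2 ^ (n + 1 - j) * (n + 1 + j).choose j
            = 2 * S2 := by
          rw [hS2, Finset.mul_sum]
          refine Finset.sum_congr rfl fun j hj => ?_
          rw [mem_range] at hj
          rw [show n + 1 - j = (n - j) + 1 by omega, pow_succ]
          ring
        rw [h1]
        congr 1
        · simp
          congr 1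
          omega
      have E1 : X = S2 + Q + 2 ^ (n + 1) := by
        rw [hX, Finset.sum_range_succ']
        have h1 : ∀ i ∈ Finset.range (n + 1),
            2 ^ (n + 1 - (i + 1)) * (n + 1 + (i + 1)).choose (i + 1)
            = 2 ^ (n - i) * (n + 1 + i).choose i + 2 ^ (n - i) * (n + 1 + i).choose (i + 1) := by
          intro i hi
          rw [show n + 1 - (i + 1) = n - i by omega,
            show n + 1 + (i + 1) = (n + 1 + i) + 1 by omega,
            Nat.choose_succ_succ, Nat.mul_add]
        rw [Finset.sum_congr rfl h1, Finset.sum_add_distrib]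
        simp [hS2, hQ]
      have HQ : Q + 2 ^ (n + 1) = 2 * 4 ^ n + (2 * n + 1).choose (n + 1) := by
        have hH : ∑ j ∈ Finset.range (n + 2), 2 ^ (n + 1 - j) * (n + j).choose j
            = Q + 2 ^ (n + 1) := by
          rw [Finset.sum_range_succ']
          congr 1
          · rw [hQ]
            refine Finset.sum_congr rfl fun i hi => ?_
            rw [show n + 1 - (i + 1) = n - i by omega, show n + (i + 1) = n + 1 + i by omega]
          · simp
        have hH2 : ∑ j ∈ Finset.range (n + 2), 2 ^ (n + 1 - j) * (n + j).choose j
            = 2 * 4 ^ n + (2 * n + 1).choose (n + 1) := by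
          rw [Finset.sum_range_succ]
          have h1 : ∑ j ∈ Finset.range (n + 1), 2 ^ (n + 1 - j) * (n + j).choose j
              = 2 * 4 ^ n := by
            rw [← ih, Finset.mul_sum]
            refine Finset.sum_congr rfl fun j hj => ?_
            rw [mem_range] at hj
            rw [show n + 1 - j = (n - j) + 1 by omega, pow_succ]
            ring
          rw [h1]
          congr 1
          · simp
            congr 1
            omega
        omega
      have hc : (2 * n + 2).choose (n + 1) = 2 * (2 * n + 1).choose (n + 1) := by
        rw [show 2 * n + 2 = (2 * n + 1) + 1 by omega, Nat.choose_succ_succ]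
        have := Nat.choose_symm (show n ≤ 2 * n + 1 by omega)
        rw [show 2 * n + 1 - n = n + 1 by omega] at this
        simp only [Nat.succ_eq_add_one] at *
        omega
      have h4 : 4 ^ (n + 1) = 4 * 4 ^ n := by rw [pow_succ]; ring
      omega

theorem sum_main (n : ℕ) :
    ∑ p ∈ Finset.range (n + 1), 2 ^ p * (2 * n - p).choose n = 4 ^ n := by
  rw [← sum_U n, ← Finset.sum_range_reflect]
  refine Finset.sum_congr rfl fun j hj => ?_
  rw [mem_range] at hj
  rw [show n + 1 - 1 - j = n - j by omega, show 2 * n - (n - j) = n + j by omega]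
  congr 1
  have := Nat.choose_symm (show n ≤ n + j by omega)
  rw [show n + j - n = j by omega] at this
  omega

theorem fact_dbl (q : ℕ) : (2 * q)! = 2 ^ q * q ! * Nat.doubleFactorial (2 * q - 1) := by
  cases q with
  | zero => simp
  | succ l =>
      rw [show 2 * (l + 1) = (2 * l + 1) + 1 by omega, Nat.factorial_eq_mul_doubleFactorial,
        show (2 * l + 1) + 1 = 2 * (l + 1) by omega, Nat.doubleFactorial_two_mul,
        show 2 * (l + 1) - 1 = 2 * l + 1 by omega]

theorem keyR (p q : ℕ) :
    ((p + 2 * q).descFactorial p : ℝ) * (Nat.doubleFactorial (2 * q - 1) : ℝ)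
        * ((2 * (p + q)).choose (p + q) : ℝ)
      = (Nat.doubleFactorial (2 * (p + q) - 1) : ℝ) * 2 ^ p
        * ((p + 2 * q).choose (p + q) : ℝ) := by
  have h2q : ((2 * q)! : ℝ) ≠ 0 := Nat.cast_ne_zero.2 (Nat.factorial_ne_zero _)
  have hpq : (((p + q)!) : ℝ) ≠ 0 := Nat.cast_ne_zero.2 (Nat.factorial_ne_zero _)
  have hq : ((q !) : ℝ) ≠ 0 := Nat.cast_ne_zero.2 (Nat.factorial_ne_zero _)
  have hpow : (2 : ℝ) ^ q ≠ 0 := by positivity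
  have hpow2 : (2 : ℝ) ^ (p + q) ≠ 0 := by positivity
  have f1n : (2 * q)! * (p + 2 * q).descFactorial p = (p + 2 * q)! := by
    have h := Nat.factorial_mul_descFactorial (show p ≤ p + 2 * q by omega)
    rwa [show p + 2 * q - p = 2 * q by omega] at h
  have e1 : ((p + 2 * q).descFactorial p : ℝ) = ((p + 2 * q)! : ℝ) / ((2 * q)! : ℝ) := by
    rw [eq_div_iff h2q]
    have := congrArg (Nat.cast : ℕ → ℝ) f1n
    push_cast at this
    linarith
  have e2 : (Nat.doubleFactorial (2 * q - 1) : ℝ) = ((2 * q)! : ℝ) / (2 ^ q * (q ! : ℝ)) := by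
    rw [eq_div_iff (by positivity)]
    have := congrArg (Nat.cast : ℕ → ℝ) (fact_dbl q)
    push_cast at this
    linarith
  have e3 : (Nat.doubleFactorial (2 * (p + q) - 1) : ℝ)
      = ((2 * (p + q))! : ℝ) / (2 ^ (p + q) * ((p + q)! : ℝ)) := by
    rw [eq_div_iff (by positivity)]
    have := congrArg (Nat.cast : ℕ → ℝ) (fact_dbl (p + q))
    push_cast at this
    linarith
  have e4 : ((2 * (p + q)).choose (p + q) : ℝ)
      = ((2 * (p + q))! : ℝ) / (((p + q)! : ℝ) * ((p + q)! : ℝ)) := by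
    rw [Nat.cast_choose ℝ (show p + q ≤ 2 * (p + q) by omega),
      show 2 * (p + q) - (p + q) = p + q by omega]
  have e5 : ((p + 2 * q).choose (p + q) : ℝ)
      = ((p + 2 * q)! : ℝ) / (((p + q)! : ℝ) * (q ! : ℝ)) := by
    rw [Nat.cast_choose ℝ (show p + q ≤ p + 2 * q by omega),
      show p + 2 * q - (p + q) = q by omega]
  rw [e1, e2, e3, e4, e5, pow_add]
  field_simp

end Main

theorem matchings_eq (n : ℕ) : Matchings n = Am (2 * n) 0 := by
  ext M
  simp only [Matchings, mem_filter, mem_univ, true_and, mem_Am]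
  exact ⟨fun ⟨h1, h2⟩ => ⟨h1, h2, fun x hx => absurd hx (by omega)⟩,
    fun ⟨h1, h2, _⟩ => ⟨h1, h2⟩⟩

theorem re_nonempty {n : ℕ} (hn : 1 ≤ n) {M : Equiv.Perm (Fin (2 * n))}
    (hinv : ∀ x, M (M x) = x) (hfpf : ∀ x, M x ≠ x) :
    (rightEndpoints n M).Nonempty := by
  have h2 : 0 < 2 * n := by omega
  refine ⟨M ⟨0, h2⟩, ?_⟩
  simp only [rightEndpoints, mem_filter, mem_univ, true_and]
  rw [hinv, Fin.lt_def]
  have hne : (M ⟨0, h2⟩ : ℕ) ≠ 0 := fun h => hfpf ⟨0, h2⟩ (Fin.ext h)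
  show ((⟨0, h2⟩ : Fin (2 * n)) : ℕ) < (M ⟨0, h2⟩ : ℕ)
  simp only [Fin.val_mk]
  omega

theorem rePos_eq (n : ℕ) (M : Equiv.Perm (Fin (2 * n))) : rePos n M
    = 0 :: (((rightEndpoints n M).sort (· ≤ ·)).map (fun p : Fin (2 * n) => (p : ℕ) + 1)) := by
  unfold rePos
  congr 1
  induction ((rightEndpoints n M).sort (· ≤ ·)) with
  | nil => rfl
  | cons a l ih => simp_all

theorem D_eq {n : ℕ} (hn : 1 ≤ n) {M : Equiv.Perm (Fin (2 * n))}
    (hinv : ∀ x, M (M x) = x) (hfpf : ∀ x, M x ≠ x) :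
    D n M 1 = ((rightEndpoints n M).min' (re_nonempty hn hinv hfpf) : ℕ) + 1 := by
  unfold D
  rw [rePos_eq]
  have hlen : 0 < ((rightEndpoints n M).sort (· ≤ ·)).length := by
    rw [Finset.length_sort]
    exact card_pos.2 (re_nonempty hn hinv hfpf)
  have hmaplen :
      0 < (((rightEndpoints n M).sort (· ≤ ·)).map
        (fun p : Fin (2 * n) => (p : ℕ) + 1)).length := by
    rw [List.length_map]
    exact hlen
  simp only [show (1 : ℕ) - 1 = 0 from rfl, List.getD_cons_succ, List.getD_cons_zero,
    Nat.sub_zero]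
  rw [List.getD_eq_getElem _ _ hmaplen, List.getElem_map]
  exact congrArg (fun z : Fin (2 * n) => (z : ℕ) + 1) (Finset.sorted_zero_eq_min' (h := hlen))

theorem D_lt_iff {n : ℕ} (hn : 1 ≤ n) {M : Equiv.Perm (Fin (2 * n))}
    (hinv : ∀ x, M (M x) = x) (hfpf : ∀ x, M x ≠ x) (p : ℕ) :
    p < D n M 1 ↔ ∀ i : Fin (2 * n), (i : ℕ) < p → (i : ℕ) < (M i : ℕ) := by
  rw [D_eq hn hinv hfpf]
  constructor
  · intro h i hip
    by_contra hc
    push_neg at hc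
    have hne : (M i : ℕ) ≠ (i : ℕ) := fun h' => hfpf i (Fin.ext h')
    have hmem : i ∈ rightEndpoints n M := by
      simp only [rightEndpoints, mem_filter, mem_univ, true_and]
      rw [Fin.lt_def]
      omega
    have hle := Finset.min'_le _ i hmem
    rw [Fin.le_def] at hle
    omega
  · intro h
    set r := (rightEndpoints n M).min' (re_nonempty hn hinv hfpf) with hr
    have hmem : r ∈ rightEndpoints n M := Finset.min'_mem _ _
    simp only [rightEndpoints, mem_filter, mem_univ, true_and] at hmem
    rw [Fin.lt_def] at hmem
    by_contra hc
    push_neg at hc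
    have := h r (by omega)
    omega

open scoped Classical in
theorem sum_D (n : ℕ) (hn : 1 ≤ n) :
    ∑ M ∈ Matchings n, D n M 1 = ∑ p ∈ Finset.range (2 * n), (Am (2 * n) p).card := by
  have h1 : ∀ M ∈ Matchings n, D n M 1
      = ∑ p ∈ Finset.range (2 * n), if p < D n M 1 then 1 else 0 := by
    intro M hM
    obtain ⟨hinv, hfpf⟩ := (mem_filter.1 hM).2
    rw [← Finset.card_filter]
    have hD : D n M 1 ≤ 2 * n := by
      rw [D_eq hn hinv hfpf]
      have := ((rightEndpoints n M).min' (re_nonempty hn hinv hfpf)).isLt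
      omega
    have hfil : (Finset.range (2 * n)).filter (fun p => p < D n M 1)
        = Finset.range (D n M 1) := by
      ext x
      simp only [mem_filter, mem_range]
      omega
    rw [hfil, card_range]
  rw [Finset.sum_congr rfl h1, Finset.sum_comm]
  refine Finset.sum_congr rfl fun p hp => ?_
  rw [← Finset.card_filter]
  congr 1
  ext M
  simp only [mem_filter, mem_Am]
  constructor
  · rintro ⟨hM, hD⟩
    obtain ⟨hinv, hfpf⟩ := (mem_filter.1 hM).2
    exact ⟨hinv, hfpf, (D_lt_iff hn hinv hfpf p).1 hD⟩
  · rintro ⟨hinv, hfpf, hleft⟩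
    have hM : M ∈ Matchings n := by
      simp only [Matchings, mem_filter, mem_univ, true_and]
      exact ⟨hinv, hfpf⟩
    exact ⟨hM, (D_lt_iff hn hinv hfpf p).2 hleft⟩

theorem sum_N (n : ℕ) (hn : 1 ≤ n) :
    ∑ p ∈ Finset.range (2 * n), (Am (2 * n) p).card
      = ∑ p ∈ Finset.range (n + 1),
          (2 * n - p).descFactorial p * Nat.doubleFactorial (2 * (n - p) - 1) := by
  have hsub : Finset.range (n + 1) ⊆ Finset.range (2 * n) :=
    Finset.range_subset_range.2 (by omega)
  have h0 : ∑ p ∈ Finset.range (2 * n), (Am (2 * n) p).card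
      = ∑ p ∈ Finset.range (n + 1), (Am (2 * n) p).card := by
    refine (Finset.sum_subset hsub fun p hp hnp => ?_).symm
    rw [mem_range] at hp hnp
    simp [Am_eq_empty (2 * n) p (by omega) (by omega)]
  rw [h0]
  exact Finset.sum_congr rfl fun p hp =>
    card_Am_formula p n (by rw [mem_range] at hp; omega)

theorem grand (n : ℕ) (hn : 1 ≤ n) :
    (∑ M ∈ Matchings n, D n M 1) * (2 * n).choose n
      = Nat.doubleFactorial (2 * n - 1) * 4 ^ n := by
  rw [sum_D n hn, sum_N n hn, Finset.sum_mul]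
  have hterm : ∀ p ∈ Finset.range (n + 1),
      (2 * n - p).descFactorial p * Nat.doubleFactorial (2 * (n - p) - 1) * (2 * n).choose n
      = Nat.doubleFactorial (2 * n - 1) * (2 ^ p * (2 * n - p).choose n) := by
    intro p hp
    rw [mem_range] at hp
    have hkey := keyR p (n - p)
    rw [show p + 2 * (n - p) = 2 * n - p by omega,
      show p + (n - p) = n by omega] at hkey
    have : ((2 * n - p).descFactorial p * Nat.doubleFactorial (2 * (n - p) - 1)
          * (2 * n).choose n : ℝ)
        = (Nat.doubleFactorial (2 * n - 1) * (2 ^ p * (2 * n - p).choose n) : ℝ) := by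
      push_cast
      push_cast at hkey
      linarith
    exact_mod_cast this
  rw [Finset.sum_congr rfl hterm, ← Finset.mul_sum, sum_main n]

end FB

/-- **Proposition.** For every `n ≥ 1`, `E[D_{n,1}] = 2^{2n}/C(2n,n)`; equivalently,
`∑_M min{p : M(p) < p} = (2n−1)!! · 4^n / C(2n,n)`, the sum running over all
fixed-point-free involutions of `{1,…,2n}`. -/
theorem expectation_first_block (n : ℕ) (hn : 1 ≤ n) :
    Ex n (fun M => (D n M 1 : ℝ)) = 2 ^ (2 * n) / ((2 * n).choose n : ℝ)
      ∧ (∑ M ∈ Matchings n, (D n M 1 : ℝ))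
          = (Nat.doubleFactorial (2 * n - 1) : ℝ) * 4 ^ n / ((2 * n).choose n : ℝ) := by  classical
  have hC : ((2 * n).choose n : ℝ) ≠ 0 :=
    Nat.cast_ne_zero.2 (Nat.choose_pos (by omega)).ne'
  have hD0 : (Nat.doubleFactorial (2 * n - 1) : ℝ) ≠ 0 :=
    Nat.cast_ne_zero.2 (Nat.doubleFactorial_pos _).ne'
  have hcard : (Matchings n).card = Nat.doubleFactorial (2 * n - 1) := by
    rw [FB.matchings_eq, FB.card_Am_matchings]
  have hgrand := FB.grand n hn
  have hsum2 : (∑ M ∈ Matchings n, (D n M 1 : ℝ))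
      = (Nat.doubleFactorial (2 * n - 1) : ℝ) * 4 ^ n / ((2 * n).choose n : ℝ) := by
    rw [eq_div_iff hC]
    have hcast : ((∑ M ∈ Matchings n, D n M 1 : ℕ) : ℝ) * ((2 * n).choose n : ℝ)
        = (Nat.doubleFactorial (2 * n - 1) : ℝ) * 4 ^ n := by exact_mod_cast hgrand
    rw [← hcast]
    congr 1
    push_cast
    rfl
  refine ⟨?_, hsum2⟩
  unfold Ex
  rw [hsum2, hcard]
  rw [show ((2 : ℝ)) ^ (2 * n) = 4 ^ n by rw [pow_mul]; norm_num]
  field_simp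
end

section
/- There exists a constant C > 0 such that for every integer n ≥ 1, | Var(D_{n,1}) − (4 − π) n | ≤ C √n, where Var(D_{n,1}) = E[D_{n,1}²] − (E[D_{n,1}])² is the variance of the length of the first block. -/
open Finset MeasureTheory ProbabilityTheory Filter Real

namespace VFB

/-- `A n k` : matchings whose first `k` positions are left endpoints. -/
def A (n k : ℕ) : Finset (Equiv.Perm (Fin (2 * n))) :=
  (Matchings n).filter (fun M => ∀ p : Fin (2 * n), (p : ℕ) < k → (p : ℕ) < (M p : ℕ))

lemma mem_matchings {n : ℕ} {M : Equiv.Perm (Fin (2 * n))} :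
    M ∈ Matchings n ↔ (∀ p, M (M p) = p) ∧ ∀ p, M p ≠ p := by
  simp [Matchings]

lemma mem_A {n k : ℕ} {M : Equiv.Perm (Fin (2 * n))} :
    M ∈ A n k ↔ M ∈ Matchings n ∧ ∀ p : Fin (2 * n), (p : ℕ) < k → (p : ℕ) < (M p : ℕ) := by
  simp [A]

lemma A_ge {n k : ℕ} {M : Equiv.Perm (Fin (2 * n))} (hM : M ∈ A n k)
    {p : Fin (2 * n)} (hp : (p : ℕ) < k) : k ≤ (M p : ℕ) := by
  rw [mem_A] at hM
  obtain ⟨hMm, hA⟩ := hM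
  by_contra h
  push_neg at h
  have h2 := hA (M p) h
  rw [(mem_matchings.1 hMm).1 p] at h2
  have := hA p hp
  omega

lemma D_one_gt_iff {n : ℕ} (hn : 1 ≤ n) {M : Equiv.Perm (Fin (2 * n))}
    (hM : M ∈ Matchings n) (k : ℕ) :
    k < D n M 1 ↔ ∀ p : Fin (2 * n), (p : ℕ) < k → (p : ℕ) < (M p : ℕ) := by
  obtain ⟨hinv, hfpf⟩ := mem_matchings.1 hM
  have h2n : 0 < 2 * n := by omega
  set s := rightEndpoints n M with hs
  have hsmem : ∀ p, p ∈ s ↔ (M p : ℕ) < (p : ℕ) := by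
    intro p
    rw [hs, rightEndpoints, Finset.mem_filter, Fin.lt_def]
    exact ⟨fun h => h.2, fun h => ⟨Finset.mem_univ p, h⟩⟩
  have hlast : (⟨2 * n - 1, by omega⟩ : Fin (2 * n)) ∈ s := by
    rw [hsmem]
    have h1 : M ⟨2 * n - 1, by omega⟩ ≠ ⟨2 * n - 1, by omega⟩ := hfpf _
    have h2 : (M ⟨2 * n - 1, by omega⟩ : ℕ) < 2 * n := (M _).isLt
    have h3 : (M ⟨2 * n - 1, by omega⟩ : ℕ) ≠ 2 * n - 1 := by
      intro h
      exact h1 (Fin.ext (by simpa using h))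
    simp only []
    omega
  have hne : s.Nonempty := ⟨_, hlast⟩
  have hlen : 0 < (s.sort (· ≤ ·)).length := by
    rw [Finset.length_sort]; exact Finset.card_pos.2 hne
  have hD : D n M 1 = (s.min' hne : ℕ) + 1 := by
    unfold D rePos
    obtain ⟨a, t, hat⟩ : ∃ a t, s.sort (· ≤ ·) = a :: t := by
      cases h : s.sort (· ≤ ·) with
      | nil => rw [h] at hlen; simp at hlen
      | cons a t => exact ⟨a, t, rfl⟩
    have ha : a = s.min' hne := by
      have h0 := @Finset.sorted_zero_eq_min' _ _ s hlen
      simp only [hat, List.getElem_cons_zero] at h0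
      exact h0
    rw [← hs, hat, ha]
    simp
  rw [hD]
  constructor
  · intro hk p hp
    by_contra h
    push_neg at h
    have hlt : (M p : ℕ) < (p : ℕ) := by
      rcases lt_or_eq_of_le h with h' | h'
      · exact h'
      · exact absurd (Fin.ext h') (hfpf p)
    have hps : p ∈ s := (hsmem p).2 hlt
    have := Finset.min'_le s p hps
    rw [Fin.le_def] at this
    omega
  · intro hA
    have hmem := (hsmem _).1 (Finset.min'_mem s hne)
    by_contra h
    push_neg at h
    have := hA (s.min' hne) (by omega)
    omega

lemma filter_D_eq {n : ℕ} (hn : 1 ≤ n) (k : ℕ) [DecidablePred fun M : Equiv.Perm (Fin (2*n)) => k < D n M 1] :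
    (Matchings n).filter (fun M => k < D n M 1) = A n k := by
  unfold A
  apply Finset.filter_congr
  intro M hM
  exact D_one_gt_iff hn hM k

lemma card_filter_ge {m : ℕ} (k : ℕ) :
    ((univ : Finset (Fin m)).filter fun j : Fin m => k ≤ (j : ℕ)).card = m - k := by
  rw [← Nat.card_Ico k m]
  refine Finset.card_bij' (fun (j : Fin m) _ => (j : ℕ))
    (fun i hi => (⟨i, (Finset.mem_Ico.1 hi).2⟩ : Fin m)) ?_ ?_ ?_ ?_
  · intro a ha
    simp only [mem_filter, mem_univ, true_and] at ha
    exact Finset.mem_Ico.2 ⟨ha, a.isLt⟩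
  · intro i hi
    simp only [mem_filter, mem_univ, true_and]
    exact (Finset.mem_Ico.1 hi).1
  · intro a _; exact Fin.ext rfl
  · intro i _; rfl

lemma card_filter_lt' {m k : ℕ} (hk : k ≤ m) :
    ((univ : Finset (Fin m)).filter fun j : Fin m => (j : ℕ) < k).card = k := by
  classical
  have key := Finset.card_filter_add_card_filter_not
    (s := (univ : Finset (Fin m))) (p := fun j : Fin m => k ≤ (j : ℕ))
  rw [card_filter_ge] at key
  have h2 : ((univ : Finset (Fin m)).filter fun j : Fin m => ¬ k ≤ (j : ℕ)) =
      ((univ : Finset (Fin m)).filter fun j : Fin m => (j : ℕ) < k) := by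
    apply Finset.filter_congr
    intro j _
    simp only [not_le]
  rw [h2, Finset.card_univ, Fintype.card_fin] at key
  omega

lemma card_partner {n k : ℕ} (hk : k ≤ n) (hn : 1 ≤ n) {M : Equiv.Perm (Fin (2 * n))}
    (hM : M ∈ A n k) :
    ((univ : Finset (Fin (2 * n))).filter
      fun j : Fin (2 * n) => k ≤ (j : ℕ) ∧ ((M j : Fin (2 * n)) : ℕ) < k).card = k := by
  obtain ⟨hMm, hprop⟩ := mem_A.1 hM
  obtain ⟨hinv, hfpf⟩ := mem_matchings.1 hMm
  have hbij : ((univ : Finset (Fin (2 * n))).filter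
      fun j : Fin (2 * n) => k ≤ (j : ℕ) ∧ ((M j : Fin (2 * n)) : ℕ) < k).card
      = ((univ : Finset (Fin (2 * n))).filter fun p : Fin (2 * n) => (p : ℕ) < k).card := by
    refine Finset.card_bij' (fun j _ => M j) (fun p _ => M p) ?_ ?_ ?_ ?_
    · intro j hj
      simp only [mem_filter, mem_univ, true_and] at hj ⊢
      exact hj.2
    · intro p hp
      simp only [mem_filter, mem_univ, true_and] at hp ⊢
      refine ⟨A_ge hM hp, ?_⟩
      rw [hinv p]; exact hp
    · intro j _; exact hinv j
    · intro p _; exact hinv p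
  rw [hbij, card_filter_lt' (by omega)]

lemma card_good {n k : ℕ} (hk : k ≤ n) (hn : 1 ≤ n) {M : Equiv.Perm (Fin (2 * n))}
    (hM : M ∈ A n k) :
    ((univ : Finset (Fin (2 * n))).filter
      fun j : Fin (2 * n) => k ≤ (j : ℕ) ∧ k ≤ ((M j : Fin (2 * n)) : ℕ)).card
      = 2 * n - 2 * k := by
  classical
  have key := Finset.card_filter_add_card_filter_not
    (s := (univ : Finset (Fin (2 * n))).filter fun j : Fin (2 * n) => k ≤ (j : ℕ))
    (p := fun j : Fin (2 * n) => k ≤ ((M j : Fin (2 * n)) : ℕ))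
  rw [Finset.filter_filter, Finset.filter_filter, card_filter_ge] at key
  have h1 : ((univ : Finset (Fin (2 * n))).filter
      fun j : Fin (2 * n) => k ≤ (j : ℕ) ∧ ¬ k ≤ ((M j : Fin (2 * n)) : ℕ)).card = k := by
    have heq : ((univ : Finset (Fin (2 * n))).filter
        fun j : Fin (2 * n) => k ≤ (j : ℕ) ∧ ¬ k ≤ ((M j : Fin (2 * n)) : ℕ)) =
        ((univ : Finset (Fin (2 * n))).filter
        fun j : Fin (2 * n) => k ≤ (j : ℕ) ∧ ((M j : Fin (2 * n)) : ℕ) < k) := by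
      apply Finset.filter_congr
      intro j _
      simp only [not_le]
    rw [heq, card_partner hk hn hM]
  rw [h1] at key
  omega

/-- conjugation of a permutation -/
def cj {m : ℕ} (σ M : Equiv.Perm (Fin m)) : Equiv.Perm (Fin m) := (σ.trans M).trans σ

lemma cj_apply {m : ℕ} (σ M : Equiv.Perm (Fin m)) (p : Fin m) : cj σ M p = σ (M (σ p)) := rfl

lemma cj_cj {m : ℕ} {σ : Equiv.Perm (Fin m)} (hσ : ∀ x, σ (σ x) = x) (M : Equiv.Perm (Fin m)) :
    cj σ (cj σ M) = M := by
  apply Equiv.ext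
  intro p
  simp only [cj_apply, hσ]

lemma cj_mem_matchings {n : ℕ} {σ M : Equiv.Perm (Fin (2 * n))} (hσ : ∀ x, σ (σ x) = x)
    (hM : M ∈ Matchings n) : cj σ M ∈ Matchings n := by
  obtain ⟨hinv, hfpf⟩ := mem_matchings.1 hM
  rw [mem_matchings]
  constructor
  · intro p
    simp only [cj_apply, hσ, hinv]
  · intro p h
    simp only [cj_apply] at h
    have h2 : σ (σ (M (σ p))) = σ p := congrArg σ h
    rw [hσ] at h2
    exact hfpf (σ p) h2

lemma swap_ge {m k : ℕ} {a b : Fin m} (ha : (a : ℕ) = k) (hb : k ≤ (b : ℕ))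
    {x : Fin m} (hx : k ≤ (x : ℕ)) : k ≤ ((Equiv.swap a b x : Fin m) : ℕ) := by
  rw [Equiv.swap_apply_def]
  split_ifs with h1 h2
  · exact hb
  · omega
  · exact hx

lemma swap_lt_fix {m k : ℕ} {a b : Fin m} (ha : (a : ℕ) = k) (hb : k ≤ (b : ℕ))
    {x : Fin m} (hx : (x : ℕ) < k) : Equiv.swap a b x = x := by
  apply Equiv.swap_apply_of_ne_of_ne
  · intro h; rw [h] at hx; omega
  · intro h; rw [h] at hx; omega

lemma rec_card {n k : ℕ} (hn : 1 ≤ n) (hk : k ≤ n) :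
    (2 * n - 2 * k) * (A n k).card = (2 * n - k) * (A n (k + 1)).card := by
  classical
  have hk2n : k < 2 * n := by omega
  set a : Fin (2 * n) := ⟨k, hk2n⟩ with hadef
  have haval : (a : ℕ) = k := rfl
  set T := (A n k).sigma (fun M => (univ : Finset (Fin (2 * n))).filter
      fun j : Fin (2 * n) => k ≤ (j : ℕ) ∧ k ≤ ((M j : Fin (2 * n)) : ℕ)) with hT
  set U := (A n (k + 1)).sigma (fun M => (univ : Finset (Fin (2 * n))).filter
      fun j : Fin (2 * n) => k ≤ (j : ℕ)) with hU
  have hTcard : T.card = (A n k).card * (2 * n - 2 * k) := by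
    rw [hT, Finset.card_sigma]
    rw [Finset.sum_congr rfl (fun M hM => card_good hk hn hM)]
    rw [Finset.sum_const, smul_eq_mul]
  have hUcard : U.card = (A n (k + 1)).card * (2 * n - k) := by
    rw [hU, Finset.card_sigma]
    rw [Finset.sum_congr rfl (fun M _ => card_filter_ge k)]
    rw [Finset.sum_const, smul_eq_mul]
  have hswapself : ∀ (b : Fin (2 * n)) (x : Fin (2 * n)),
      Equiv.swap a b (Equiv.swap a b x) = x := fun b x => Equiv.swap_apply_self a b x
  have hTU : T.card = U.card := by
    refine Finset.card_bij' (fun x _ => ⟨cj (Equiv.swap a x.2) x.1, x.2⟩)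
      (fun x _ => ⟨cj (Equiv.swap a x.2) x.1, x.2⟩) ?_ ?_ ?_ ?_
    · -- forward membership
      rintro ⟨M, j⟩ hx
      dsimp only
      rw [hT, Finset.mem_sigma] at hx
      obtain ⟨hMA, hj⟩ := hx
      dsimp only at hMA hj
      simp only [mem_filter, mem_univ, true_and] at hj
      obtain ⟨hj1, hj2⟩ := hj
      rw [hU, Finset.mem_sigma]
      obtain ⟨hMm, hprop⟩ := mem_A.1 hMA
      have hM'm : cj (Equiv.swap a j) M ∈ Matchings n :=
        cj_mem_matchings (hswapself j) hMm
      constructor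
      · rw [mem_A]
        refine ⟨hM'm, ?_⟩
        intro p hp
        rcases Nat.lt_or_ge (p : ℕ) k with hpk | hpk
        · rw [cj_apply, swap_lt_fix haval hj1 hpk]
          have h1 : (p : ℕ) < (M p : ℕ) := hprop p hpk
          have h2 : k ≤ (M p : ℕ) := A_ge hMA hpk
          have h3 := swap_ge haval hj1 h2
          omega
        · have hpa : p = a := Fin.ext (by omega)
          subst hpa
          rw [cj_apply, Equiv.swap_apply_left]
          have h2 : k ≤ ((Equiv.swap a j (M j) : Fin (2 * n)) : ℕ) := swap_ge haval hj1 hj2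
          have hne : cj (Equiv.swap a j) M a ≠ a := (mem_matchings.1 hM'm).2 a
          rw [cj_apply, Equiv.swap_apply_left] at hne
          have h3 : ((Equiv.swap a j (M j) : Fin (2 * n)) : ℕ) ≠ k := by
            intro h
            exact hne (Fin.ext (by omega))
          omega
      · simp only [mem_filter, mem_univ, true_and]
        exact hj1
    · -- backward membership
      rintro ⟨M, j⟩ hx
      dsimp only
      rw [hU, Finset.mem_sigma] at hx
      obtain ⟨hMA, hj⟩ := hx
      dsimp only at hMA hj
      simp only [mem_filter, mem_univ, true_and] at hj
      rw [hT, Finset.mem_sigma]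
      obtain ⟨hMm, hprop⟩ := mem_A.1 hMA
      have hM'm : cj (Equiv.swap a j) M ∈ Matchings n :=
        cj_mem_matchings (hswapself j) hMm
      constructor
      · rw [mem_A]
        refine ⟨hM'm, ?_⟩
        intro p hp
        rw [cj_apply, swap_lt_fix haval hj hp]
        have h2 : k + 1 ≤ (M p : ℕ) := A_ge hMA (by omega)
        have h3 := swap_ge haval hj (x := M p) (by omega)
        omega
      · simp only [mem_filter, mem_univ, true_and]
        refine ⟨hj, ?_⟩
        rw [cj_apply, Equiv.swap_apply_right]
        have h2 : k + 1 ≤ ((M a : Fin (2 * n)) : ℕ) := A_ge hMA (by omega)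
        have h3 := swap_ge haval hj (x := M a) (by omega)
        omega
    · rintro ⟨M, j⟩ _
      dsimp only
      rw [cj_cj (hswapself j)]
    · rintro ⟨M, j⟩ _
      dsimp only
      rw [cj_cj (hswapself j)]
  rw [mul_comm (2 * n - 2 * k), mul_comm (2 * n - k), ← hTcard, ← hUcard, hTU]

lemma A_zero (n : ℕ) : A n 0 = Matchings n := by
  apply Finset.filter_true_of_mem
  intro M _ p hp
  omega

open Fin.NatCast in
lemma matchings_card_pos {n : ℕ} (hn : 1 ≤ n) : 0 < (Matchings n).card := by
  haveI : NeZero (2 * n) := ⟨by omega⟩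
  apply Finset.card_pos.2
  refine ⟨Equiv.addLeft (n : Fin (2 * n)), ?_⟩
  rw [mem_matchings]
  have hnn : ((n : Fin (2 * n)) : ℕ) = n := by
    rw [Fin.val_natCast, Nat.mod_eq_of_lt (by omega)]
  constructor
  · intro p
    show (n : Fin (2 * n)) + ((n : Fin (2 * n)) + p) = p
    rw [← add_assoc]
    have h0 : (n : Fin (2 * n)) + (n : Fin (2 * n)) = 0 := by
      rw [← Nat.cast_add]
      have : n + n = 2 * n := by ring
      rw [this, Fin.natCast_self]
    rw [h0, zero_add]
  · intro p h
    have h2 : (n : Fin (2 * n)) + p = p := h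
    have h3 : (n : Fin (2 * n)) = 0 := by
      have := add_right_cancel (b := p) (by rw [h2, zero_add] : (n : Fin (2 * n)) + p = 0 + p)
      exact this
    rw [Fin.ext_iff, hnn] at h3
    simp at h3
    omega

lemma A_top_empty {n : ℕ} (hn : 1 ≤ n) : (A n (n + 1)).card = 0 := by
  have h := rec_card hn (le_refl n)
  have h0 : 2 * n - 2 * n = 0 := by omega
  rw [h0, zero_mul] at h
  have hn0 : 2 * n - n = n := by omega
  rw [hn0] at h
  have := Nat.mul_eq_zero.1 h.symm
  omega

lemma D_le {n : ℕ} (hn : 1 ≤ n) {M : Equiv.Perm (Fin (2 * n))} (hM : M ∈ Matchings n) :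
    D n M 1 ≤ n + 1 := by
  by_contra h
  push_neg at h
  have hmem : M ∈ A n (n + 1) := by
    rw [mem_A]
    exact ⟨hM, (D_one_gt_iff hn hM (n + 1)).1 h⟩
  have := Finset.card_pos.2 ⟨M, hmem⟩
  rw [A_top_empty hn] at this
  omega

/-- the real ratio P k = a_k / g -/
noncomputable def P (n k : ℕ) : ℝ := ((A n k).card : ℝ) / ((Matchings n).card : ℝ)

lemma P_nonneg (n k : ℕ) : 0 ≤ P n k := by
  apply div_nonneg <;> positivity

lemma P_zero {n : ℕ} (hn : 1 ≤ n) : P n 0 = 1 := by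
  rw [P, A_zero, div_self]
  have := matchings_card_pos hn
  positivity

lemma P_top {n : ℕ} (hn : 1 ≤ n) : P n (n + 1) = 0 := by
  rw [P, A_top_empty hn]
  simp

lemma P_rec {n k : ℕ} (hn : 1 ≤ n) (hk : k ≤ n) :
    (2 * n - 2 * k : ℝ) * P n k = (2 * n - k : ℝ) * P n (k + 1) := by
  have h := rec_card hn hk
  have hcast : ((2 * n - 2 * k : ℕ) : ℝ) = (2 * n - 2 * k : ℝ) := by
    push_cast [Nat.sub_eq, Nat.cast_sub (by omega : 2 * k ≤ 2 * n)]
    ring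
  have hcast2 : ((2 * n - k : ℕ) : ℝ) = (2 * n - k : ℝ) := by
    rw [Nat.cast_sub (by omega : k ≤ 2 * n)]
    push_cast
    ring
  rw [P, P, ← mul_div_assoc, ← mul_div_assoc]
  rw [← hcast, ← hcast2, ← Nat.cast_mul, ← Nat.cast_mul, h]

/-- sum over layers: D as ℝ -/
lemma sum_D {n : ℕ} (hn : 1 ≤ n) :
    Ex n (fun M => (D n M 1 : ℝ)) = ∑ k ∈ Finset.range (n + 1), P n k := by
  classical
  rw [Ex]
  have key : ∑ M ∈ Matchings n, (D n M 1 : ℝ)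
      = ∑ k ∈ Finset.range (n + 1), ((A n k).card : ℝ) := by
    have step1 : ∀ M ∈ Matchings n, (D n M 1 : ℝ)
        = ∑ k ∈ Finset.range (n + 1), (if k < D n M 1 then (1 : ℝ) else 0) := by
      intro M hM
      rw [← Finset.sum_filter]
      have hfil : (Finset.range (n + 1)).filter (fun k => k < D n M 1)
          = Finset.range (D n M 1) := by
        ext x
        simp only [Finset.mem_filter, Finset.mem_range]
        have := D_le hn hM
        omega
      rw [hfil]
      simp
    rw [Finset.sum_congr rfl step1, Finset.sum_comm]
    apply Finset.sum_congr rfl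
    intro k _
    rw [← Finset.sum_filter]
    rw [filter_D_eq hn k]
    simp
  rw [key, Finset.sum_div]
  apply Finset.sum_congr rfl
  intro k _
  rw [P]

lemma sum_D_sq {n : ℕ} (hn : 1 ≤ n) :
    Ex n (fun M => ((D n M 1 : ℝ)) ^ 2)
      = ∑ k ∈ Finset.range (n + 1), (2 * (k : ℝ) + 1) * P n k := by
  classical
  rw [Ex]
  have sq_sum : ∀ d : ℕ, ∑ k ∈ Finset.range d, (2 * (k : ℝ) + 1) = (d : ℝ) ^ 2 := by
    intro d
    induction d with
    | zero => simp
    | succ d ih =>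
      rw [Finset.sum_range_succ, ih]
      push_cast
      ring
  have key : ∑ M ∈ Matchings n, ((D n M 1 : ℝ)) ^ 2
      = ∑ k ∈ Finset.range (n + 1), (2 * (k : ℝ) + 1) * ((A n k).card : ℝ) := by
    have step1 : ∀ M ∈ Matchings n, ((D n M 1 : ℝ)) ^ 2
        = ∑ k ∈ Finset.range (n + 1), (if k < D n M 1 then (2 * (k : ℝ) + 1) else 0) := by
      intro M hM
      rw [← Finset.sum_filter]
      have hfil : (Finset.range (n + 1)).filter (fun k => k < D n M 1)
          = Finset.range (D n M 1) := by
        ext x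
        simp only [Finset.mem_filter, Finset.mem_range]
        have := D_le hn hM
        omega
      rw [hfil, sq_sum]
    rw [Finset.sum_congr rfl step1, Finset.sum_comm]
    apply Finset.sum_congr rfl
    intro k _
    rw [← Finset.sum_filter]
    rw [filter_D_eq hn k]
    rw [Finset.sum_const, nsmul_eq_mul, mul_comm]
  rw [key, Finset.sum_div]
  apply Finset.sum_congr rfl
  intro k _
  rw [P, mul_div_assoc]

lemma P_upper {n : ℕ} (hn : 1 ≤ n) : ∀ k : ℕ, k ≤ n →
    P n k ≤ Real.exp (-((k : ℝ) * ((k : ℝ) - 1) / (4 * n))) := by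
  intro k
  induction k with
  | zero => intro _; simp [P_zero hn]
  | succ k ih =>
    intro hk1
    have hk : k ≤ n := by omega
    have hN : (0 : ℝ) < n := by positivity
    have hkR : (k : ℝ) ≤ n := by exact_mod_cast hk
    have h2nk : (0 : ℝ) < 2 * n - k := by linarith
    have h2n2k : (0 : ℝ) ≤ 2 * n - 2 * k := by linarith
    have hrec := P_rec hn hk
    have hP1 : P n (k + 1) = (2 * n - 2 * k : ℝ) / (2 * n - k) * P n k := by
      field_simp at hrec ⊢
      linarith [hrec]
    have hratio : (2 * n - 2 * k : ℝ) / (2 * n - k) ≤ Real.exp (-((k : ℝ) / (2 * n))) := by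
      have h1 : (2 * n - 2 * k : ℝ) / (2 * n - k) ≤ 1 - (k : ℝ) / (2 * n) := by
        rw [div_le_iff₀ h2nk]
        have hexp : (1 - (k : ℝ) / (2 * n)) * (2 * n - k)
            = 2 * n - 2 * k + (k : ℝ) ^ 2 / (2 * n) := by
          field_simp
          ring
        rw [hexp]
        have : (0 : ℝ) ≤ (k : ℝ) ^ 2 / (2 * n) := by positivity
        linarith
      have h2 := Real.add_one_le_exp (-((k : ℝ) / (2 * n)))
      linarith
    have hcomb : P n (k + 1) ≤ Real.exp (-((k : ℝ) / (2 * n)))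
        * Real.exp (-((k : ℝ) * ((k : ℝ) - 1) / (4 * n))) := by
      rw [hP1]
      exact mul_le_mul hratio (ih hk) (P_nonneg n k) (Real.exp_nonneg _)
    have heq : Real.exp (-((k : ℝ) / (2 * n))) * Real.exp (-((k : ℝ) * ((k : ℝ) - 1) / (4 * n)))
        = Real.exp (-(((k + 1 : ℕ) : ℝ) * (((k + 1 : ℕ) : ℝ) - 1) / (4 * n))) := by
      rw [← Real.exp_add]
      congr 1
      push_cast
      field_simp
      ring
    exact hcomb.trans (le_of_eq heq)

lemma P_lower {n : ℕ} (hn : 1 ≤ n) : ∀ k : ℕ, k ≤ n →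
    Real.exp (-(∑ i ∈ Finset.range k, (i : ℝ) / (2 * n - 2 * i))) ≤ P n k := by
  intro k
  induction k with
  | zero => intro _; simp [P_zero hn]
  | succ k ih =>
    intro hk1
    have hk : k ≤ n := by omega
    have hkn : k < n := by omega
    have hN : (0 : ℝ) < n := by positivity
    have hkR : (k : ℝ) < n := by exact_mod_cast hkn
    have h2nk : (0 : ℝ) < 2 * n - k := by linarith
    have h2n2k : (0 : ℝ) < 2 * n - 2 * k := by linarith
    have hrec := P_rec hn hk
    have hP1 : P n (k + 1) = (2 * n - 2 * k : ℝ) / (2 * n - k) * P n k := by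
      field_simp at hrec ⊢
      linarith [hrec]
    have hratio : Real.exp (-((k : ℝ) / (2 * n - 2 * k))) ≤ (2 * n - 2 * k : ℝ) / (2 * n - k) := by
      have h1 : (2 * n - k : ℝ) / (2 * n - 2 * k) ≤ Real.exp ((k : ℝ) / (2 * n - 2 * k)) := by
        have h2 := Real.add_one_le_exp ((k : ℝ) / (2 * n - 2 * k))
        have h3 : (2 * n - k : ℝ) / (2 * n - 2 * k) = (k : ℝ) / (2 * n - 2 * k) + 1 := by
          rw [div_add_one (ne_of_gt h2n2k)]; congr 1; ring
        linarith
      rw [Real.exp_neg]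
      rw [inv_le_comm₀ (Real.exp_pos _) (by positivity)]
      rw [inv_div]
      exact h1
    rw [Finset.sum_range_succ, neg_add, Real.exp_add, hP1]
    have hmul := mul_le_mul (ih hk) hratio (Real.exp_nonneg _) (P_nonneg n k)
    exact le_of_le_of_eq hmul (mul_comm _ _)

lemma sum_frac_le {n k : ℕ} (hn : 1 ≤ n) (hk2 : 2 * k ≤ n) :
    ∑ i ∈ Finset.range k, (i : ℝ) / (2 * n - 2 * i)
      ≤ (k : ℝ) ^ 2 / (4 * n) + (k : ℝ) ^ 3 / (n : ℝ) ^ 2 := by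
  have hN : (0 : ℝ) < n := by positivity
  have hterm : ∀ i ∈ Finset.range k, (i : ℝ) / (2 * n - 2 * i)
      ≤ (i : ℝ) / (2 * n) + (i : ℝ) ^ 2 / (n : ℝ) ^ 2 := by
    intro i hi
    have hik : i < k := Finset.mem_range.1 hi
    have h2i : 2 * (i : ℝ) + 2 ≤ n := by
      have : 2 * i + 2 ≤ n := by omega
      exact_mod_cast this
    have hx : (0 : ℝ) ≤ i := Nat.cast_nonneg i
    have hd1 : (0 : ℝ) < 2 * n - 2 * i := by linarith
    rw [div_le_iff₀ hd1]
    have hexp : ((i : ℝ) / (2 * n) + (i : ℝ) ^ 2 / (n : ℝ) ^ 2) * (2 * n - 2 * i)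
        = (i : ℝ) + (i : ℝ) ^ 2 * ((n : ℝ) - 2 * i) / (n : ℝ) ^ 2 := by
      field_simp
      ring
    rw [hexp]
    have h0 : (0 : ℝ) ≤ (i : ℝ) ^ 2 * ((n : ℝ) - 2 * i) / (n : ℝ) ^ 2 := by
      apply div_nonneg _ (by positivity)
      apply mul_nonneg (by positivity)
      linarith
    linarith
  calc ∑ i ∈ Finset.range k, (i : ℝ) / (2 * n - 2 * i)
      ≤ ∑ i ∈ Finset.range k, ((i : ℝ) / (2 * n) + (i : ℝ) ^ 2 / (n : ℝ) ^ 2) :=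
        Finset.sum_le_sum hterm
    _ = (∑ i ∈ Finset.range k, (i : ℝ)) / (2 * n)
        + (∑ i ∈ Finset.range k, (i : ℝ) ^ 2) / (n : ℝ) ^ 2 := by
        rw [Finset.sum_add_distrib, Finset.sum_div, Finset.sum_div]
    _ ≤ (k : ℝ) ^ 2 / (4 * n) + (k : ℝ) ^ 3 / (n : ℝ) ^ 2 := by
        have h1 : (∑ i ∈ Finset.range k, (i : ℝ)) ≤ (k : ℝ) ^ 2 / 2 := by
          have hnat := Finset.sum_range_id_mul_two k
          have hnat2 : (∑ i ∈ Finset.range k, i) * 2 ≤ k * k :=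
            hnat ▸ Nat.mul_le_mul_left k (Nat.sub_le k 1) |>.trans_eq rfl
          have hcast : ((∑ i ∈ Finset.range k, i : ℕ) : ℝ) * 2 ≤ (k : ℝ) * k := by
            exact_mod_cast hnat2
          push_cast at hcast
          nlinarith [hcast]
        have h2 : (∑ i ∈ Finset.range k, (i : ℝ) ^ 2) ≤ (k : ℝ) ^ 3 := by
          calc (∑ i ∈ Finset.range k, (i : ℝ) ^ 2) ≤ ∑ i ∈ Finset.range k, (k : ℝ) ^ 2 := by
                apply Finset.sum_le_sum
                intro i hi
                have : (i : ℝ) ≤ k := by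
                  have := Finset.mem_range.1 hi; exact_mod_cast this.le
                nlinarith [Nat.cast_nonneg (α := ℝ) i]
            _ = (k : ℝ) * (k : ℝ) ^ 2 := by rw [Finset.sum_const, Finset.card_range]; ring
            _ = (k : ℝ) ^ 3 := by ring
        have e1 : (∑ i ∈ Finset.range k, (i : ℝ)) / (2 * n) ≤ (k : ℝ) ^ 2 / (4 * n) := by
          have : (k : ℝ) ^ 2 / (4 * n) = ((k : ℝ) ^ 2 / 2) / (2 * n) := by ring
          rw [this]
          apply div_le_div_of_nonneg_right h1 ?_ |>.trans_eq rfl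
          positivity
        have e2 : (∑ i ∈ Finset.range k, (i : ℝ) ^ 2) / (n : ℝ) ^ 2
            ≤ (k : ℝ) ^ 3 / (n : ℝ) ^ 2 := by
          apply div_le_div_of_nonneg_right h2 ?_ |>.trans_eq rfl
          positivity
        linarith

lemma P_lower2 {n k : ℕ} (hn : 1 ≤ n) (hk2 : 2 * k ≤ n) :
    Real.exp (-((k : ℝ) ^ 2 / (4 * n)))
      - (k : ℝ) ^ 3 * Real.exp (-((k : ℝ) ^ 2 / (4 * n))) / (n : ℝ) ^ 2 ≤ P n k := by
  have h1 := P_lower hn k (by omega)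
  have h2 := sum_frac_le hn hk2
  set A := (k : ℝ) ^ 2 / (4 * n)
  set B := (k : ℝ) ^ 3 / (n : ℝ) ^ 2
  have h3 : Real.exp (-(A + B)) ≤ Real.exp (-(∑ i ∈ Finset.range k, (i : ℝ) / (2 * n - 2 * i))) := by
    apply Real.exp_le_exp.2
    linarith
  have h4 : Real.exp (-(A + B)) = Real.exp (-A) * Real.exp (-B) := by
    rw [← Real.exp_add]; ring_nf
  have h5 : 1 - B ≤ Real.exp (-B) := by
    have := Real.add_one_le_exp (-B)
    linarith
  have h6 : Real.exp (-A) * (1 - B) ≤ Real.exp (-A) * Real.exp (-B) :=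
    mul_le_mul_of_nonneg_left h5 (Real.exp_nonneg _)
  have h7 : Real.exp (-A) - (k : ℝ) ^ 3 * Real.exp (-A) / (n : ℝ) ^ 2
      = Real.exp (-A) * (1 - B) := by
    rw [show B = (k : ℝ) ^ 3 / (n : ℝ) ^ 2 from rfl]
    ring
  rw [h7]
  calc Real.exp (-A) * (1 - B) ≤ Real.exp (-A) * Real.exp (-B) := h6
    _ = Real.exp (-(A + B)) := h4.symm
    _ ≤ Real.exp (-(∑ i ∈ Finset.range k, (i : ℝ) / (2 * n - 2 * i))) := h3
    _ ≤ P n k := h1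

lemma exp_cube_ge {t : ℝ} (ht : 0 ≤ t) : (t / 3) ^ 3 ≤ Real.exp t := by
  have h1 : Real.exp t = Real.exp (t / 3) ^ 3 := by
    rw [← Real.exp_nat_mul]
    congr 1
    push_cast
    ring
  rw [h1]
  apply pow_le_pow_left₀ (by positivity)
  have := Real.add_one_le_exp (t / 3)
  linarith

lemma x_exp_bound {N x : ℝ} (hN : 1 ≤ N) (hx : 0 ≤ x) :
    x * Real.exp (-(x ^ 2 / (8 * N))) ≤ 8 * Real.sqrt N := by
  have hNs : Real.sqrt N * Real.sqrt N = N := Real.mul_self_sqrt (by linarith)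
  have hs1 : 1 ≤ Real.sqrt N := by
    nlinarith [Real.sqrt_nonneg N]
  rcases le_or_gt x (Real.sqrt N) with h | h
  · have he : Real.exp (-(x ^ 2 / (8 * N))) ≤ 1 := by
      apply Real.exp_le_one_iff.2
      have : (0:ℝ) ≤ x ^ 2 / (8 * N) := by positivity
      linarith
    nlinarith [Real.sqrt_nonneg N]
  · have hxpos : 0 < x := lt_of_lt_of_le (by linarith) h.le
    have he : x ^ 2 / (8 * N) ≤ Real.exp (x ^ 2 / (8 * N)) := by
      have := Real.add_one_le_exp (x ^ 2 / (8 * N))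
      linarith
    rw [Real.exp_neg, mul_inv_le_iff₀ (Real.exp_pos _)]
    have hstep : 8 * Real.sqrt N * (x ^ 2 / (8 * N)) = x ^ 2 / Real.sqrt N := by
      rw [eq_div_iff (by positivity)]
      field_simp
      nlinarith [hNs]
    have h1 : x ≤ x ^ 2 / Real.sqrt N := by
      rw [le_div_iff₀ (by positivity)]
      nlinarith
    calc x ≤ x ^ 2 / Real.sqrt N := h1
      _ = 8 * Real.sqrt N * (x ^ 2 / (8 * N)) := hstep.symm
      _ ≤ 8 * Real.sqrt N * Real.exp (x ^ 2 / (8 * N)) := by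
          apply mul_le_mul_of_nonneg_left he (by positivity)

lemma x3_exp_bound {N x : ℝ} (hN : 1 ≤ N) (hx : 0 ≤ x) :
    x ^ 3 * Real.exp (-(x ^ 2 / (8 * N))) ≤ 512 * (N * Real.sqrt N) := by
  have hNs : Real.sqrt N * Real.sqrt N = N := Real.mul_self_sqrt (by linarith)
  have hs1 : 1 ≤ Real.sqrt N := by nlinarith [Real.sqrt_nonneg N]
  rcases le_or_gt x (3 * Real.sqrt N) with h | h
  · have he : Real.exp (-(x ^ 2 / (8 * N))) ≤ 1 := by
      apply Real.exp_le_one_iff.2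
      have : (0:ℝ) ≤ x ^ 2 / (8 * N) := by positivity
      linarith
    have hx3 : x ^ 3 ≤ 27 * (N * Real.sqrt N) := by
      nlinarith [Real.sqrt_nonneg N, sq_nonneg x, sq_nonneg (x - 3 * Real.sqrt N)]
    nlinarith [pow_nonneg hx 3]
  · have hxpos : 0 < x := lt_of_lt_of_le (by nlinarith [Real.sqrt_nonneg N]) h.le
    have he := exp_cube_ge (t := x ^ 2 / (8 * N)) (by positivity)
    have he2 : x ^ 6 / 13824 / N ^ 3 ≤ Real.exp (x ^ 2 / (8 * N)) := by
      have heq : (x ^ 2 / (8 * N) / 3) ^ 3 = x ^ 6 / 13824 / N ^ 3 := by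
        field_simp
        ring
      rw [← heq]
      exact he
    rw [Real.exp_neg, mul_inv_le_iff₀ (Real.exp_pos _)]
    have hN3 : (0:ℝ) < N ^ 3 := by positivity
    have key : 512 * (N * Real.sqrt N) * (x ^ 6 / 13824 / N ^ 3) ≥ x ^ 3 := by
      rw [ge_iff_le, ← sub_nonneg]
      have hexp2 : 512 * (N * Real.sqrt N) * (x ^ 6 / 13824 / N ^ 3) - x ^ 3
          = (Real.sqrt N * x ^ 6 / 27 - N ^ 2 * x ^ 3) / N ^ 2 := by
        field_simp
        nlinarith [hNs]
      rw [hexp2]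
      apply div_nonneg _ (by positivity)
      have hx3 : 27 * (N * Real.sqrt N) < x ^ 3 := by
        nlinarith [Real.sqrt_nonneg N, sq_nonneg (x - 3 * Real.sqrt N), sq_nonneg x]
      have key2 : (Real.sqrt N * x ^ 3 / 27) * (27 * (N * Real.sqrt N))
          ≤ (Real.sqrt N * x ^ 3 / 27) * x ^ 3 := by
        apply mul_le_mul_of_nonneg_left hx3.le
        positivity
      have e3 : Real.sqrt N * x ^ 3 / 27 * (27 * (N * Real.sqrt N)) = N ^ 2 * x ^ 3 := by
        rw [show (N:ℝ) ^ 2 = N * (Real.sqrt N * Real.sqrt N) by rw [hNs]; ring]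
        ring
      have e4 : Real.sqrt N * x ^ 3 / 27 * x ^ 3 = Real.sqrt N * x ^ 6 / 27 := by ring
      linarith [key2, e3, e4]
    calc x ^ 3 ≤ 512 * (N * Real.sqrt N) * (x ^ 6 / 13824 / N ^ 3) := key
      _ ≤ 512 * (N * Real.sqrt N) * Real.exp (x ^ 2 / (8 * N)) := by
        apply mul_le_mul_of_nonneg_left he2 (by positivity)

open MeasureTheory in
lemma integrable_gauss_c {c : ℝ} (hc : 0 < c) :
    MeasureTheory.Integrable (fun x : ℝ => Real.exp (-(x ^ 2 / c))) := by
  have h := integrable_exp_neg_mul_sq (b := 1 / c) (by positivity)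
  have heq : (fun x : ℝ => Real.exp (-(1 / c) * x ^ 2)) = fun x : ℝ => Real.exp (-(x ^ 2 / c)) := by
    funext x; congr 1; field_simp
  rw [heq] at h
  exact h

open MeasureTheory in
lemma integral_gauss_c {c : ℝ} (hc : 0 < c) :
    ∫ x in Set.Ioi (0 : ℝ), Real.exp (-(x ^ 2 / c)) = Real.sqrt (Real.pi * c) / 2 := by
  have h := integral_gaussian_Ioi (1 / c)
  have heq : (fun x : ℝ => Real.exp (-(1 / c) * x ^ 2)) = fun x : ℝ => Real.exp (-(x ^ 2 / c)) := by
    funext x; congr 1; field_simp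
  rw [heq] at h
  rw [h]
  congr 1
  rw [div_div_eq_mul_div, div_one]  -- π / (1/c) = π * c
  
open MeasureTheory in
lemma gauss_antitone {c : ℝ} (hc : 0 < c) {s : Set ℝ} (hs : s ⊆ Set.Ici 0) :
    AntitoneOn (fun x : ℝ => Real.exp (-(x ^ 2 / c))) s := by
  intro x hx y hy hxy
  have hx0 : 0 ≤ x := hs hx
  apply Real.exp_le_exp.2
  have h2 : x ^ 2 ≤ y ^ 2 := by nlinarith
  have h3 : x ^ 2 / c ≤ y ^ 2 / c := by gcongr
  linarith

open MeasureTheory in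
lemma gauss_sum_upper {c : ℝ} (hc : 0 < c) (K : ℕ) :
    ∑ k ∈ Finset.range (K + 1), Real.exp (-((k : ℝ) ^ 2 / c))
      ≤ 1 + Real.sqrt (Real.pi * c) / 2 := by
  set f : ℝ → ℝ := fun x => Real.exp (-(x ^ 2 / c)) with hf
  have hsum : ∑ k ∈ Finset.range (K + 1), Real.exp (-((k : ℝ) ^ 2 / c))
      = f 0 + ∑ i ∈ Finset.range K, f ((0 : ℝ) + ((i + 1 : ℕ) : ℝ)) := by
    rw [Finset.sum_range_succ' (fun k => Real.exp (-((k : ℝ) ^ 2 / c))) K]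
    rw [add_comm]
    congr 1
    · simp [hf]
    · apply Finset.sum_congr rfl
      intro i _
      simp only [hf, zero_add]
  rw [hsum]
  have hf0 : f 0 = 1 := by simp [hf]
  rw [hf0]
  have hanti : AntitoneOn f (Set.Icc (0 : ℝ) (0 + (K : ℕ))) := by
    apply gauss_antitone hc
    intro x hx
    exact hx.1
  have hint := hanti.sum_le_integral
  have h2 : (∫ x in (0 : ℝ)..((0 : ℝ) + (K : ℕ)), f x) ≤ Real.sqrt (Real.pi * c) / 2 := by
    rw [zero_add, intervalIntegral.integral_of_le (by positivity)]
    rw [← integral_gauss_c hc]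
    apply setIntegral_mono_set
    · exact (integrable_gauss_c hc).integrableOn
    · apply Filter.Eventually.of_forall
      intro x
      positivity
    · apply Filter.Eventually.of_forall
      exact Set.Ioc_subset_Ioi_self
  linarith [hint, h2]

open MeasureTheory in
lemma gauss_sum_lower {c : ℝ} (hc : 0 < c) (K : ℕ) :
    (∫ x in (0 : ℝ)..((K + 1 : ℕ) : ℝ), Real.exp (-(x ^ 2 / c)))
      ≤ ∑ k ∈ Finset.range (K + 1), Real.exp (-((k : ℝ) ^ 2 / c)) := by
  set f : ℝ → ℝ := fun x => Real.exp (-(x ^ 2 / c)) with hf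
  have hanti : AntitoneOn f (Set.Icc (0 : ℝ) (0 + ((K + 1 : ℕ) : ℝ))) := by
    apply gauss_antitone hc
    intro x hx
    exact hx.1
  have hint := hanti.integral_le_sum
  have heq : ∑ i ∈ Finset.range (K + 1), f ((0 : ℝ) + (i : ℕ))
      = ∑ k ∈ Finset.range (K + 1), Real.exp (-((k : ℝ) ^ 2 / c)) := by
    apply Finset.sum_congr rfl
    intro i _
    simp [hf]
  rw [heq] at hint
  have heq2 : (∫ x in (0 : ℝ)..((K + 1 : ℕ) : ℝ), f x)
      = ∫ x in (0 : ℝ)..((0 : ℝ) + ((K + 1 : ℕ) : ℝ)), f x := by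
    rw [zero_add]
  rw [heq2]
  exact hint

open MeasureTheory in
lemma gauss_split {c a : ℝ} (hc : 0 < c) (ha : 0 ≤ a) :
    (∫ x in Set.Ioc (0 : ℝ) a, Real.exp (-(x ^ 2 / c)))
      = Real.sqrt (Real.pi * c) / 2 - ∫ x in Set.Ioi a, Real.exp (-(x ^ 2 / c)) := by
  have hu : Set.Ioc (0 : ℝ) a ∪ Set.Ioi a = Set.Ioi (0 : ℝ) := Set.Ioc_union_Ioi_eq_Ioi ha
  have hdisj : Disjoint (Set.Ioc (0 : ℝ) a) (Set.Ioi a) := Set.Ioc_disjoint_Ioi le_rfl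
  have hi1 : IntegrableOn (fun x : ℝ => Real.exp (-(x ^ 2 / c))) (Set.Ioc (0:ℝ) a) :=
    (integrable_gauss_c hc).integrableOn
  have hi2 : IntegrableOn (fun x : ℝ => Real.exp (-(x ^ 2 / c))) (Set.Ioi a) :=
    (integrable_gauss_c hc).integrableOn
  have hkey := MeasureTheory.setIntegral_union hdisj measurableSet_Ioi hi1 hi2
  rw [hu] at hkey
  rw [integral_gauss_c hc] at hkey
  linarith [hkey]

open MeasureTheory in
lemma gauss_tail {c a : ℝ} (hc : 0 < c) (ha : 0 < a) (hca : c ≤ 8 * a) :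
    (∫ x in Set.Ioi a, Real.exp (-(x ^ 2 / c))) ≤ 8 := by
  have h1 : (∫ x in Set.Ioi a, Real.exp (-(x ^ 2 / c)))
      ≤ ∫ x in Set.Ioi a, Real.exp (-(1 / 8) * x) := by
    apply setIntegral_mono_on
    · exact (integrable_gauss_c hc).integrableOn
    · exact exp_neg_integrableOn_Ioi a (by norm_num)
    · exact measurableSet_Ioi
    · intro x hx
      apply Real.exp_le_exp.2
      rw [Set.mem_Ioi] at hx
      have hxpos : 0 < x := ha.trans hx
      have : x / 8 ≤ x ^ 2 / c := by
        rw [div_le_div_iff₀ (by norm_num) hc]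
        nlinarith
      linarith
  have h2 : (∫ x in Set.Ioi a, Real.exp (-(1 / 8) * x)) = 8 * Real.exp (-(1 / 8) * a) := by
    have := integral_comp_mul_left_Ioi (fun y => Real.exp (-y)) a (b := 1 / 8) (by norm_num)
    simp only [neg_mul] at this ⊢
    rw [this]
    rw [integral_exp_neg_Ioi]
    rw [smul_eq_mul]
    norm_num
  rw [h2] at h1
  have h3 : Real.exp (-(1 / 8) * a) ≤ 1 := by
    apply Real.exp_le_one_iff.2
    nlinarith
  nlinarith [h1, h3]

lemma sqrt_pi4 {N : ℝ} (hN : 0 ≤ N) : Real.sqrt (Real.pi * (4 * N)) = 2 * Real.sqrt (Real.pi * N) := by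
  rw [show Real.pi * (4 * N) = 4 * (Real.pi * N) by ring]
  rw [Real.sqrt_mul (by norm_num) _]
  rw [show (4:ℝ) = 2 ^ 2 by norm_num, Real.sqrt_sq (by norm_num)]

lemma sqrt8_le {N : ℝ} (hN : 0 ≤ N) : Real.sqrt (Real.pi * (8 * N)) / 2 ≤ 3 * Real.sqrt N := by
  have h1 : Real.pi * (8 * N) ≤ 36 * N := by
    nlinarith [Real.pi_le_four, hN]
  calc Real.sqrt (Real.pi * (8 * N)) / 2 ≤ Real.sqrt (36 * N) / 2 := by
        apply div_le_div_of_nonneg_right (Real.sqrt_le_sqrt h1) (by norm_num) |>.trans_eq rfl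
    _ = 3 * Real.sqrt N := by
        rw [show (36:ℝ) * N = 6 ^ 2 * N by ring, Real.sqrt_mul (by positivity) _,
          Real.sqrt_sq (by norm_num)]
        ring

lemma P_upper2 {n k : ℕ} (hn : 1 ≤ n) (hk : k ≤ n) :
    P n k ≤ Real.exp (-((k : ℝ) ^ 2 / (4 * n)))
      + (4 / Real.sqrt n) * Real.exp (-((k : ℝ) ^ 2 / (8 * n))) := by
  have hN : (1 : ℝ) ≤ n := by exact_mod_cast hn
  have hN0 : (0 : ℝ) < n := by linarith
  have hkR : (k : ℝ) ≤ n := by exact_mod_cast hk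
  have hsN : Real.sqrt (n : ℝ) * Real.sqrt (n : ℝ) = (n : ℝ) := Real.mul_self_sqrt (by linarith)
  have hsN1 : 1 ≤ Real.sqrt (n : ℝ) := by nlinarith [Real.sqrt_nonneg (n : ℝ)]
  have h := P_upper hn k hk
  have e1 : Real.exp (-((k : ℝ) * ((k : ℝ) - 1) / (4 * n)))
      = Real.exp (-((k : ℝ) ^ 2 / (4 * n))) * Real.exp ((k : ℝ) / (4 * n)) := by
    rw [← Real.exp_add]
    congr 1
    field_simp
    ring
  have hx1 : (0 : ℝ) ≤ (k : ℝ) / (4 * n) := by positivity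
  have hx2 : (k : ℝ) / (4 * n) ≤ 1 / 2 := by
    rw [div_le_div_iff₀ (by positivity) (by norm_num)]
    linarith
  have hexp_le : Real.exp ((k : ℝ) / (4 * n)) ≤ 1 + (k : ℝ) / (2 * n) := by
    set x := (k : ℝ) / (4 * n) with hxdef
    have h1 : (0:ℝ) < 1 - x := by linarith
    have h2 : (1 - x) * Real.exp x ≤ 1 := by
      have h3 := Real.add_one_le_exp (-x)
      have h4 : Real.exp (-x) * Real.exp x = 1 := by
        rw [← Real.exp_add]; simp
      nlinarith [Real.exp_pos x]
    have h5 : (k : ℝ) / (2 * n) = 2 * x := by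
      rw [hxdef]; field_simp; ring
    rw [h5]
    nlinarith [h2, h1]
  have key : P n k ≤ Real.exp (-((k : ℝ) ^ 2 / (4 * n))) * (1 + (k : ℝ) / (2 * n)) := by
    calc P n k ≤ Real.exp (-((k : ℝ) * ((k : ℝ) - 1) / (4 * n))) := h
      _ = Real.exp (-((k : ℝ) ^ 2 / (4 * n))) * Real.exp ((k : ℝ) / (4 * n)) := e1
      _ ≤ Real.exp (-((k : ℝ) ^ 2 / (4 * n))) * (1 + (k : ℝ) / (2 * n)) := by
          apply mul_le_mul_of_nonneg_left hexp_le (Real.exp_nonneg _)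
  have split : Real.exp (-((k : ℝ) ^ 2 / (4 * n)))
      = Real.exp (-((k : ℝ) ^ 2 / (8 * n))) * Real.exp (-((k : ℝ) ^ 2 / (8 * n))) := by
    rw [← Real.exp_add]
    congr 1
    field_simp
    ring
  have hkexp : (k : ℝ) * Real.exp (-((k : ℝ) ^ 2 / (8 * n))) ≤ 8 * Real.sqrt (n : ℝ) :=
    x_exp_bound hN (Nat.cast_nonneg k)
  have err : Real.exp (-((k : ℝ) ^ 2 / (4 * n))) * ((k : ℝ) / (2 * n))
      ≤ (4 / Real.sqrt n) * Real.exp (-((k : ℝ) ^ 2 / (8 * n))) := by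
    rw [split]
    have e2 : Real.exp (-((k : ℝ) ^ 2 / (8 * n))) * Real.exp (-((k : ℝ) ^ 2 / (8 * n)))
        * ((k : ℝ) / (2 * n))
        = ((k : ℝ) * Real.exp (-((k : ℝ) ^ 2 / (8 * n)))) / (2 * n)
          * Real.exp (-((k : ℝ) ^ 2 / (8 * n))) := by
      ring
    rw [e2]
    apply mul_le_mul_of_nonneg_right _ (Real.exp_nonneg _)
    rw [div_le_iff₀ (by positivity)]
    have e3 : 4 / Real.sqrt (n : ℝ) * (2 * n) = 8 * Real.sqrt (n : ℝ) := by
      rw [div_mul_eq_mul_div, eq_comm, eq_div_iff (by positivity)]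
      nlinarith [hsN]
    rw [e3]
    exact hkexp
  calc P n k ≤ Real.exp (-((k : ℝ) ^ 2 / (4 * n))) * (1 + (k : ℝ) / (2 * n)) := key
    _ = Real.exp (-((k : ℝ) ^ 2 / (4 * n)))
        + Real.exp (-((k : ℝ) ^ 2 / (4 * n))) * ((k : ℝ) / (2 * n)) := by ring
    _ ≤ Real.exp (-((k : ℝ) ^ 2 / (4 * n)))
        + (4 / Real.sqrt n) * Real.exp (-((k : ℝ) ^ 2 / (8 * n))) := by linarith [err]

lemma S_upper {n : ℕ} (hn : 1 ≤ n) :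
    ∑ k ∈ Finset.range (n + 1), P n k ≤ Real.sqrt (Real.pi * n) + 17 := by
  have hN : (1 : ℝ) ≤ n := by exact_mod_cast hn
  have hN0 : (0 : ℝ) < n := by linarith
  have hsN1 : 1 ≤ Real.sqrt (n : ℝ) := by
    nlinarith [Real.sqrt_nonneg (n : ℝ), Real.mul_self_sqrt (le_of_lt hN0)]
  have hterm : ∀ k ∈ Finset.range (n + 1), P n k
      ≤ Real.exp (-((k : ℝ) ^ 2 / (4 * n)))
        + (4 / Real.sqrt n) * Real.exp (-((k : ℝ) ^ 2 / (8 * n))) := by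
    intro k hk
    exact P_upper2 hn (by have := Finset.mem_range.1 hk; omega : k ≤ n)
  have h1 := Finset.sum_le_sum hterm
  rw [Finset.sum_add_distrib] at h1
  have h2 := gauss_sum_upper (c := 4 * (n : ℝ)) (by positivity) n
  have h3 := gauss_sum_upper (c := 8 * (n : ℝ)) (by positivity) n
  have h4 : ∑ k ∈ Finset.range (n + 1), (4 / Real.sqrt n) * Real.exp (-((k : ℝ) ^ 2 / (8 * n)))
      = (4 / Real.sqrt n) * ∑ k ∈ Finset.range (n + 1), Real.exp (-((k : ℝ) ^ 2 / (8 * n))) := by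
    rw [Finset.mul_sum]
  rw [h4] at h1
  have h5 : (4 / Real.sqrt n) * ∑ k ∈ Finset.range (n + 1), Real.exp (-((k : ℝ) ^ 2 / (8 * n)))
      ≤ (4 / Real.sqrt n) * (1 + 3 * Real.sqrt n) := by
    apply mul_le_mul_of_nonneg_left _ (by positivity)
    calc ∑ k ∈ Finset.range (n + 1), Real.exp (-((k : ℝ) ^ 2 / (8 * n)))
        ≤ 1 + Real.sqrt (Real.pi * (8 * n)) / 2 := h3
      _ ≤ 1 + 3 * Real.sqrt n := by linarith [sqrt8_le (le_of_lt hN0)]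
  have h6 : (4 / Real.sqrt n) * (1 + 3 * Real.sqrt n) ≤ 16 := by
    rw [div_mul_eq_mul_div, div_le_iff₀ (by positivity)]
    nlinarith [Real.mul_self_sqrt (le_of_lt hN0), hsN1]
  have h7 : ∑ k ∈ Finset.range (n + 1), Real.exp (-((k : ℝ) ^ 2 / (4 * n)))
      ≤ 1 + Real.sqrt (Real.pi * n) := by
    calc ∑ k ∈ Finset.range (n + 1), Real.exp (-((k : ℝ) ^ 2 / (4 * n)))
        ≤ 1 + Real.sqrt (Real.pi * (4 * n)) / 2 := h2
      _ = 1 + Real.sqrt (Real.pi * n) := by rw [sqrt_pi4 (le_of_lt hN0)]; ring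
  linarith [h1, h5, h6, h7]

lemma S_lower {n : ℕ} (hn : 1 ≤ n) :
    Real.sqrt (Real.pi * n) - 2056 ≤ ∑ k ∈ Finset.range (n + 1), P n k := by
  have hN : (1 : ℝ) ≤ n := by exact_mod_cast hn
  have hN0 : (0 : ℝ) < n := by linarith
  have hsN : Real.sqrt (n : ℝ) * Real.sqrt (n : ℝ) = (n : ℝ) := Real.mul_self_sqrt (le_of_lt hN0)
  have hsN1 : 1 ≤ Real.sqrt (n : ℝ) := by nlinarith [Real.sqrt_nonneg (n : ℝ)]
  set m := n / 2 with hm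
  have hm1 : m + 1 ≤ n + 1 := by omega
  -- restrict the sum
  have hrestrict : ∑ k ∈ Finset.range (m + 1), P n k ≤ ∑ k ∈ Finset.range (n + 1), P n k := by
    apply Finset.sum_le_sum_of_subset_of_nonneg
    · exact Finset.range_subset_range.2 hm1
    · intro k _ _
      exact P_nonneg n k
  -- pointwise lower bound on range (m+1)
  have hterm : ∀ k ∈ Finset.range (m + 1),
      Real.exp (-((k : ℝ) ^ 2 / (4 * n)))
        - (512 / Real.sqrt n) * Real.exp (-((k : ℝ) ^ 2 / (8 * n))) ≤ P n k := by
    intro k hk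
    have hk2 : 2 * k ≤ n := by
      have := Finset.mem_range.1 hk
      omega
    have h1 := P_lower2 hn hk2
    have split : Real.exp (-((k : ℝ) ^ 2 / (4 * n)))
        = Real.exp (-((k : ℝ) ^ 2 / (8 * n))) * Real.exp (-((k : ℝ) ^ 2 / (8 * n))) := by
      rw [← Real.exp_add]
      congr 1
      field_simp
      ring
    have hcube : (k : ℝ) ^ 3 * Real.exp (-((k : ℝ) ^ 2 / (8 * n)))
        ≤ 512 * ((n : ℝ) * Real.sqrt n) := x3_exp_bound hN (Nat.cast_nonneg k)
    have herr : (k : ℝ) ^ 3 * Real.exp (-((k : ℝ) ^ 2 / (4 * n))) / (n : ℝ) ^ 2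
        ≤ (512 / Real.sqrt n) * Real.exp (-((k : ℝ) ^ 2 / (8 * n))) := by
      rw [split]
      have e2 : (k : ℝ) ^ 3 * (Real.exp (-((k : ℝ) ^ 2 / (8 * n)))
          * Real.exp (-((k : ℝ) ^ 2 / (8 * n)))) / (n : ℝ) ^ 2
          = ((k : ℝ) ^ 3 * Real.exp (-((k : ℝ) ^ 2 / (8 * n)))) / (n : ℝ) ^ 2
            * Real.exp (-((k : ℝ) ^ 2 / (8 * n))) := by
        ring
      rw [e2]
      apply mul_le_mul_of_nonneg_right _ (Real.exp_nonneg _)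
      rw [div_le_iff₀ (by positivity)]
      have e3 : 512 / Real.sqrt (n : ℝ) * (n : ℝ) ^ 2 = 512 * ((n : ℝ) * Real.sqrt n) := by
        rw [div_mul_eq_mul_div, eq_comm, eq_div_iff (by positivity)]
        nlinarith [hsN]
      rw [e3]
      exact hcube
    linarith [h1, herr]
  have h2 := Finset.sum_le_sum hterm
  rw [Finset.sum_sub_distrib] at h2
  -- error sum bound
  have h3 : ∑ k ∈ Finset.range (m + 1),
      (512 / Real.sqrt n) * Real.exp (-((k : ℝ) ^ 2 / (8 * n))) ≤ 2048 := by
    rw [← Finset.mul_sum]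
    have hsub : ∑ k ∈ Finset.range (m + 1), Real.exp (-((k : ℝ) ^ 2 / (8 * n)))
        ≤ ∑ k ∈ Finset.range (n + 1), Real.exp (-((k : ℝ) ^ 2 / (8 * n))) := by
      apply Finset.sum_le_sum_of_subset_of_nonneg (Finset.range_subset_range.2 hm1)
      intro k _ _
      positivity
    have hgs := gauss_sum_upper (c := 8 * (n : ℝ)) (by positivity) n
    have hb : ∑ k ∈ Finset.range (m + 1), Real.exp (-((k : ℝ) ^ 2 / (8 * n)))
        ≤ 4 * Real.sqrt n := by
      calc ∑ k ∈ Finset.range (m + 1), Real.exp (-((k : ℝ) ^ 2 / (8 * n)))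
          ≤ ∑ k ∈ Finset.range (n + 1), Real.exp (-((k : ℝ) ^ 2 / (8 * n))) := hsub
        _ ≤ 1 + Real.sqrt (Real.pi * (8 * n)) / 2 := hgs
        _ ≤ 1 + 3 * Real.sqrt n := by linarith [sqrt8_le (le_of_lt hN0)]
        _ ≤ 4 * Real.sqrt n := by linarith [hsN1]
    calc (512 / Real.sqrt n) * ∑ k ∈ Finset.range (m + 1), Real.exp (-((k : ℝ) ^ 2 / (8 * n)))
        ≤ (512 / Real.sqrt n) * (4 * Real.sqrt n) := by
          apply mul_le_mul_of_nonneg_left hb (by positivity)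
      _ = 2048 := by
          field_simp
          ring
  -- Gaussian sum lower bound
  have h4 : Real.sqrt (Real.pi * n) - 8
      ≤ ∑ k ∈ Finset.range (m + 1), Real.exp (-((k : ℝ) ^ 2 / (4 * n))) := by
    have hgl := gauss_sum_lower (c := 4 * (n : ℝ)) (by positivity) m
    have hioc : (∫ x in (0 : ℝ)..((m + 1 : ℕ) : ℝ), Real.exp (-(x ^ 2 / (4 * (n : ℝ)))))
        = ∫ x in Set.Ioc (0 : ℝ) ((m + 1 : ℕ) : ℝ), Real.exp (-(x ^ 2 / (4 * (n : ℝ)))) := by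
      rw [intervalIntegral.integral_of_le (by positivity)]
    have hsplit := gauss_split (c := 4 * (n : ℝ)) (a := ((m + 1 : ℕ) : ℝ))
      (by positivity) (by positivity)
    have htail : (∫ x in Set.Ioi ((m + 1 : ℕ) : ℝ), Real.exp (-(x ^ 2 / (4 * (n : ℝ))))) ≤ 8 := by
      apply gauss_tail (by positivity) (by positivity)
      have : n ≤ 2 * (m + 1) := by omega
      have hcast : (n : ℝ) ≤ 2 * ((m + 1 : ℕ) : ℝ) := by exact_mod_cast this
      linarith
    have hpi4 : Real.sqrt (Real.pi * (4 * (n : ℝ))) / 2 = Real.sqrt (Real.pi * n) := by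
      rw [sqrt_pi4 (le_of_lt hN0)]; ring
    rw [hioc, hsplit, hpi4] at hgl
    linarith [hgl, htail]
  linarith [hrestrict, h2, h3, h4]

lemma sum_kP {n : ℕ} (hn : 1 ≤ n) :
    ∑ k ∈ Finset.range (n + 1), (k : ℝ) * P n k
      = 2 * n + 1 - ∑ k ∈ Finset.range (n + 1), P n k := by
  have hrec : ∑ k ∈ Finset.range (n + 1), (2 * (n : ℝ) - 2 * k) * P n k
      = ∑ k ∈ Finset.range (n + 1), (2 * (n : ℝ) - k) * P n (k + 1) := by
    apply Finset.sum_congr rfl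
    intro k hk
    exact P_rec hn (by have := Finset.mem_range.1 hk; omega)
  set S := ∑ k ∈ Finset.range (n + 1), P n k with hS
  set S1 := ∑ k ∈ Finset.range (n + 1), (k : ℝ) * P n k with hS1
  have hL : ∑ k ∈ Finset.range (n + 1), (2 * (n : ℝ) - 2 * k) * P n k
      = 2 * n * S - 2 * S1 := by
    rw [hS, hS1, Finset.mul_sum, Finset.mul_sum, ← Finset.sum_sub_distrib]
    apply Finset.sum_congr rfl
    intro k _
    ring
  set f : ℕ → ℝ := fun k => (2 * (n : ℝ) + 1 - k) * P n k with hf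
  have hshift : ∀ k : ℕ, (2 * (n : ℝ) - k) * P n (k + 1) = f (k + 1) := by
    intro k
    rw [hf]
    push_cast
    ring_nf
  have hR : ∑ k ∈ Finset.range (n + 1), (2 * (n : ℝ) - k) * P n (k + 1)
      = (∑ k ∈ Finset.range (n + 2), f k) - f 0 := by
    rw [Finset.sum_congr rfl (fun k _ => hshift k)]
    rw [Finset.sum_range_succ' f (n + 1)]
    ring
  have hfn1 : f (n + 1) = 0 := by
    rw [hf]
    have := P_top hn
    simp only []
    rw [this, mul_zero]
  have hsum2 : ∑ k ∈ Finset.range (n + 2), f k = ∑ k ∈ Finset.range (n + 1), f k := by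
    rw [Finset.sum_range_succ, hfn1, add_zero]
  have hf0 : f 0 = 2 * n + 1 := by
    rw [hf]
    simp only [Nat.cast_zero]
    rw [P_zero hn]
    ring
  have hfsum : ∑ k ∈ Finset.range (n + 1), f k = (2 * n + 1) * S - S1 := by
    rw [hf, hS, hS1, Finset.mul_sum, ← Finset.sum_sub_distrib]
    apply Finset.sum_congr rfl
    intro k _
    ring
  rw [hL, hR, hsum2, hfsum, hf0] at hrec
  linarith [hrec]

lemma var_formula {n : ℕ} (hn : 1 ≤ n) :
    Ex n (fun M => ((D n M 1 : ℝ)) ^ 2) - (Ex n (fun M => (D n M 1 : ℝ))) ^ 2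
      = 4 * n + 2 - (∑ k ∈ Finset.range (n + 1), P n k)
        - (∑ k ∈ Finset.range (n + 1), P n k) ^ 2 := by
  rw [sum_D_sq hn, sum_D hn]
  have h1 : ∑ k ∈ Finset.range (n + 1), (2 * (k : ℝ) + 1) * P n k
      = 2 * (∑ k ∈ Finset.range (n + 1), (k : ℝ) * P n k)
        + ∑ k ∈ Finset.range (n + 1), P n k := by
    rw [Finset.mul_sum, ← Finset.sum_add_distrib]
    apply Finset.sum_congr rfl
    intro k _
    ring
  rw [h1, sum_kP hn]
  ring

lemma S_nonneg (n : ℕ) : 0 ≤ ∑ k ∈ Finset.range (n + 1), P n k :=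
  Finset.sum_nonneg (fun k _ => P_nonneg n k)

end VFB

/-- **Proposition.** There is a constant `C > 0` such that for every `n ≥ 1`,
`|Var(D_{n,1}) − (4−π)n| ≤ C√n`, where `Var(D_{n,1}) = E[D_{n,1}²] − (E[D_{n,1}])²`. -/
theorem variance_first_block :
    ∃ C : ℝ, 0 < C ∧ ∀ n : ℕ, 1 ≤ n →
      |(Ex n (fun M => ((D n M 1 : ℝ)) ^ 2) - (Ex n (fun M => (D n M 1 : ℝ))) ^ 2)
          - (4 - Real.pi) * n|
        ≤ C * Real.sqrt n := by
  refine ⟨50000, by norm_num, ?_⟩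
  intro n hn
  have hN : (1 : ℝ) ≤ n := by exact_mod_cast hn
  have hN0 : (0 : ℝ) < n := by linarith
  set s := Real.sqrt (n : ℝ) with hs
  have hss : s * s = (n : ℝ) := Real.mul_self_sqrt (le_of_lt hN0)
  have hs1 : 1 ≤ s := by nlinarith [Real.sqrt_nonneg (n : ℝ)]
  set p := Real.sqrt (Real.pi * n) with hp
  have hpp : p * p = Real.pi * n := Real.mul_self_sqrt (by positivity)
  have hp0 : 0 ≤ p := Real.sqrt_nonneg _
  have hp2s : p ≤ 2 * s := by
    rw [hp, hs]
    have h1 : Real.pi * n ≤ 4 * n := by nlinarith [Real.pi_le_four]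
    calc Real.sqrt (Real.pi * n) ≤ Real.sqrt (4 * n) := Real.sqrt_le_sqrt h1
      _ = 2 * Real.sqrt (n : ℝ) := by
          rw [show (4 : ℝ) * n = 2 ^ 2 * n by ring, Real.sqrt_mul (by positivity) _,
            Real.sqrt_sq (by norm_num)]
  set S := ∑ k ∈ Finset.range (n + 1), VFB.P n k with hSdef
  have hu : S ≤ p + 17 := VFB.S_upper hn
  have hl : p - 2056 ≤ S := VFB.S_lower hn
  have hS0 : 0 ≤ S := VFB.S_nonneg n
  have hvar := VFB.var_formula hn
  have hkey : (Ex n (fun M => ((D n M 1 : ℝ)) ^ 2) - (Ex n (fun M => (D n M 1 : ℝ))) ^ 2)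
      - (4 - Real.pi) * n = Real.pi * n + 2 - S - S ^ 2 := by
    rw [hvar]
    ring
  rw [hkey]
  rw [abs_le]
  have hpS : p + S ≤ 21 * s := by nlinarith
  have hSle : S ≤ 19 * s := by nlinarith
  have e1 : p * p - S ^ 2 = (p - S) * (p + S) := by ring
  have hub : (p - S) * (p + S) ≤ 2056 * (21 * s) := by
    have h1 : (p - S) * (p + S) ≤ 2056 * (p + S) :=
      mul_le_mul_of_nonneg_right (by linarith) (by linarith)
    have h2 : 2056 * (p + S) ≤ 2056 * (21 * s) := by nlinarith
    linarith
  have hlb : -(17 * (21 * s)) ≤ (p - S) * (p + S) := by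
    have h1 : -(17 : ℝ) ≤ p - S := by linarith
    have h2 : (-(17 : ℝ)) * (p + S) ≤ (p - S) * (p + S) :=
      mul_le_mul_of_nonneg_right h1 (by linarith)
    nlinarith
  constructor
  · nlinarith
  · nlinarith
end

section
/- There exists a constant C > 0 such that for all integers n ≥ 1 and m ≥ 1 with m³ ≤ n², one has | (n)_m − n^m · e^{−m(m−1)/(2n)} | ≤ C · (m³/n²) · n^m · e^{−m(m−1)/(2n)}; i.e., (n)_m = n^m e^{−C(m,2)/n} (1 + O(m³/n²)) uniformly for m = o(n^{2/3}). -/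
open Finset Real

lemma neg_log_le_aux (x : ℝ) (h0 : 0 ≤ x) (h1 : x ≤ 1/2) :
    -Real.log (1 - x) ≤ x + 2 * x ^ 2 := by
  have hx : (0:ℝ) < 1 - x := by linarith
  have h2 : Real.log (1 - x)⁻¹ ≤ (1 - x)⁻¹ - 1 :=
    Real.log_le_sub_one_of_pos (by positivity)
  rw [Real.log_inv] at h2
  have h3 : (1 - x)⁻¹ - 1 = x / (1 - x) := by field_simp; ring
  rw [h3] at h2
  have h4 : x / (1 - x) ≤ x + 2 * x ^ 2 := by
    rw [div_le_iff₀ hx]; nlinarith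
  linarith

/-- **Lemma.** There is a constant `C > 0` such that for all integers `n, m ≥ 1`
with `m³ ≤ n²`, the falling factorial `(n)_m` satisfies
`|(n)_m − n^m · e^{−m(m−1)/(2n)}| ≤ C · (m³/n²) · n^m · e^{−m(m−1)/(2n)}`;
i.e. `(n)_m = n^m e^{−C(m,2)/n}(1 + O(m³/n²))` uniformly for `m = o(n^{2/3})`. -/
theorem descFactorial_asymptotic :
    ∃ C : ℝ, 0 < C ∧ ∀ n m : ℕ, 1 ≤ n → 1 ≤ m → m ^ 3 ≤ n ^ 2 →
      |((n.descFactorial m : ℝ))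
          - (n : ℝ) ^ m * Real.exp (-(m * (m - 1) / (2 * n) : ℝ))|
        ≤ C * ((m : ℝ) ^ 3 / (n : ℝ) ^ 2)
          * ((n : ℝ) ^ m * Real.exp (-(m * (m - 1) / (2 * n) : ℝ))) := by
  refine ⟨1, one_pos, ?_⟩
  intro n m hn hm hcube
  have hN : (0:ℝ) < (n:ℝ) := by exact_mod_cast hn
  have hM : (1:ℝ) ≤ (m:ℝ) := by exact_mod_cast hm
  -- m ≤ n
  have hmn : m ≤ n := by
    by_contra h
    push_neg at h
    have h1 : n ^ 3 < m ^ 3 := Nat.pow_lt_pow_left h (by norm_num)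
    have h2 : n ^ 2 ≤ n ^ 3 := Nat.pow_le_pow_right hn (by norm_num)
    omega
  -- 2*(m-1) ≤ n
  have h2m : 2 * (m - 1) ≤ n := by
    rcases Nat.eq_or_lt_of_le hm with h1 | h1
    · simp [← h1]
    · by_contra h
      push_neg at h
      have hmz : (2:ℤ) ≤ (m:ℤ) := by exact_mod_cast h1
      have hnz : (n:ℤ) < 2 * ((m:ℤ) - 1) := by
        have : (n:ℤ) < 2 * ((m - 1 : ℕ) : ℤ) := by exact_mod_cast h
        rwa [Nat.cast_sub hm] at this
      have hcz : (m:ℤ) ^ 3 ≤ (n:ℤ) ^ 2 := by exact_mod_cast hcube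
      have hnz1 : (1:ℤ) ≤ (n:ℤ) := by exact_mod_cast hn
      nlinarith [mul_nonneg (mul_nonneg (sub_nonneg.mpr hmz) (sub_nonneg.mpr hmz))
          (sub_nonneg.mpr hmz), sq_nonneg ((m:ℤ) - 2), sq_nonneg ((n:ℤ) - 2*(m:ℤ) + 3)]
  -- key bound on x_k = k/n
  have hxk : ∀ k ∈ range m, (0:ℝ) ≤ (k:ℝ)/n ∧ (k:ℝ)/n ≤ 1/2 := by
    intro k hk
    have hk' : k < m := mem_range.mp hk
    refine ⟨by positivity, ?_⟩
    rw [div_le_iff₀ hN]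
    have h2k : 2 * k ≤ n := le_trans (by omega) h2m
    have h2k' : ((2 * k : ℕ) : ℝ) ≤ (n:ℝ) := by exact_mod_cast h2k
    push_cast at h2k'
    linarith
  have hpos : ∀ k ∈ range m, (0:ℝ) < 1 - (k:ℝ)/n := by
    intro k hk
    have := (hxk k hk).2
    linarith
  -- descFactorial as a product
  have hdf : (n.descFactorial m : ℝ) = (n:ℝ) ^ m * ∏ k ∈ range m, (1 - (k:ℝ)/n) := by
    have h1 : (n.descFactorial m : ℝ) = ∏ k ∈ range m, ((n:ℝ) - k) := by
      rw [Nat.descFactorial_eq_prod_range, Nat.cast_prod]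
      refine Finset.prod_congr rfl fun k hk => ?_
      have hk' : k < n := lt_of_lt_of_le (mem_range.mp hk) hmn
      rw [Nat.cast_sub hk'.le]
    have h2 : ∀ k ∈ range m, (n:ℝ) - k = (n:ℝ) * (1 - (k:ℝ)/n) := fun k _ => by
      field_simp
    rw [h1, Finset.prod_congr rfl h2, Finset.prod_mul_distrib, Finset.prod_const, card_range]
  -- product as exponential of sum of logs
  set L := ∑ k ∈ range m, Real.log (1 - (k:ℝ)/n) with hLdef
  have hprod : ∏ k ∈ range m, (1 - (k:ℝ)/n) = Real.exp L := by
    rw [hLdef, Real.exp_sum]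
    exact Finset.prod_congr rfl fun k hk => (Real.exp_log (hpos k hk)).symm
  -- Gauss sum
  have hgauss : ∑ k ∈ range m, (k:ℝ) = (m:ℝ) * ((m:ℝ) - 1) / 2 := by
    have h2 : ((∑ i ∈ range m, i) * 2 : ℕ) = (m * (m-1) : ℕ) := Finset.sum_range_id_mul_two m
    have h3 := congrArg (Nat.cast : ℕ → ℝ) h2
    push_cast [Nat.cast_sub hm] at h3
    linarith
  set S := (m:ℝ) * ((m:ℝ) - 1) / (2 * (n:ℝ)) with hSdef
  set R := (m:ℝ) ^ 3 / (n:ℝ) ^ 2 with hRdef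
  -- upper bound : L ≤ -S
  have hup : L ≤ -S := by
    have h1 : L ≤ ∑ k ∈ range m, (-((k:ℝ)/n)) := by
      refine Finset.sum_le_sum fun k hk => ?_
      have := Real.log_le_sub_one_of_pos (hpos k hk)
      linarith
    have h2 : ∑ k ∈ range m, (-((k:ℝ)/n)) = -S := by
      rw [hSdef]
      rw [Finset.sum_congr rfl (fun k (_ : k ∈ range m) => by
        show -((k:ℝ)/n) = (k:ℝ) * (-(1/(n:ℝ))); ring), ← Finset.sum_mul, hgauss]
      field_simp
    linarith
  -- lower bound : -L ≤ S + R
  have hlow : -L ≤ S + R := by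
    have h1 : -L = ∑ k ∈ range m, (-Real.log (1 - (k:ℝ)/n)) := by
      rw [hLdef, ← Finset.sum_neg_distrib]
    have h2 : ∀ k ∈ range m, -Real.log (1 - (k:ℝ)/n)
        ≤ (k:ℝ) * (1/(n:ℝ) + 2*((m:ℝ)-1)/(n:ℝ)^2) := by
      intro k hk
      obtain ⟨hx0, hx1⟩ := hxk k hk
      have hlog := neg_log_le_aux ((k:ℝ)/n) hx0 hx1
      have hk1 : (k:ℝ) ≤ (m:ℝ) - 1 := by
        have hkm : (k:ℝ) + 1 ≤ (m:ℝ) := by exact_mod_cast mem_range.mp hk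
        linarith
      have hk0 : (0:ℝ) ≤ (k:ℝ) := Nat.cast_nonneg k
      have hsq : 2 * ((k:ℝ)/n)^2 ≤ 2*((m:ℝ)-1)*(k:ℝ)/(n:ℝ)^2 := by
        have hnum : 2*(k:ℝ)^2 ≤ 2*((m:ℝ)-1)*(k:ℝ) := by nlinarith
        have hmul := mul_le_mul_of_nonneg_right hnum
          (by positivity : (0:ℝ) ≤ 1/(n:ℝ)^2)
        calc 2 * ((k:ℝ)/n)^2 = 2*(k:ℝ)^2 * (1/(n:ℝ)^2) := by ring
          _ ≤ 2*((m:ℝ)-1)*(k:ℝ) * (1/(n:ℝ)^2) := hmul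
          _ = 2*((m:ℝ)-1)*(k:ℝ)/(n:ℝ)^2 := by ring
      have : (k:ℝ)/n + 2*((m:ℝ)-1)*(k:ℝ)/(n:ℝ)^2
          = (k:ℝ) * (1/(n:ℝ) + 2*((m:ℝ)-1)/(n:ℝ)^2) := by ring
      linarith
    have h3 : -L ≤ (∑ k ∈ range m, (k:ℝ)) * (1/(n:ℝ) + 2*((m:ℝ)-1)/(n:ℝ)^2) := by
      rw [h1, Finset.sum_mul]
      exact Finset.sum_le_sum h2
    rw [hgauss] at h3
    have key : (m:ℝ) * ((m:ℝ)-1)^2 ≤ (m:ℝ)^3 := by nlinarith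
    have hexp : (m:ℝ)*((m:ℝ)-1)/2 * (1/(n:ℝ) + 2*((m:ℝ)-1)/(n:ℝ)^2)
        = S + (m:ℝ)*((m:ℝ)-1)^2/(n:ℝ)^2 := by
      rw [hSdef]; field_simp
    have hdiv : (m:ℝ)*((m:ℝ)-1)^2/(n:ℝ)^2 ≤ R := by
      rw [hRdef, div_le_div_iff₀ (by positivity) (by positivity)]
      nlinarith
    linarith
  -- assemble
  have hdfA : (n.descFactorial m : ℝ) = (n:ℝ)^m * Real.exp L := by rw [hdf, hprod]
  have hexp_le : Real.exp L ≤ Real.exp (-S) := Real.exp_le_exp.mpr hup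
  have hexp_ge : Real.exp (-S) * (1 - R) ≤ Real.exp L := by
    have hre : 1 - R ≤ Real.exp (-R) := by
      have := Real.add_one_le_exp (-R); linarith
    have h1 := mul_le_mul_of_nonneg_left hre (Real.exp_pos (-S)).le
    have h2 : Real.exp (-S) * Real.exp (-R) = Real.exp (-S - R) := by
      rw [← Real.exp_add]; ring_nf
    have h3 : Real.exp (-S - R) ≤ Real.exp L := Real.exp_le_exp.mpr (by linarith)
    linarith
  have hnm : (0:ℝ) ≤ (n:ℝ)^m := by positivity
  have hle : (n:ℝ)^m * Real.exp L ≤ (n:ℝ)^m * Real.exp (-S) :=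
    mul_le_mul_of_nonneg_left hexp_le hnm
  have hstep : Real.exp (-S) - Real.exp L ≤ Real.exp (-S) * R := by
    have heq : Real.exp (-S) * (1 - R) = Real.exp (-S) - Real.exp (-S) * R := by ring
    linarith
  rw [hdfA, abs_of_nonpos (sub_nonpos.mpr hle)]
  calc -((n:ℝ)^m * Real.exp L - (n:ℝ)^m * Real.exp (-S))
      = (n:ℝ)^m * (Real.exp (-S) - Real.exp L) := by ring
    _ ≤ (n:ℝ)^m * (Real.exp (-S) * R) := mul_le_mul_of_nonneg_left hstep hnm
    _ = 1 * R * ((n:ℝ)^m * Real.exp (-S)) := by ring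
end

section
/- For all natural numbers N, i, j, l, one has ∑_{k=0}^{N} C(k, l) · C(N−k, i) · C(N−k−i, j) = C(i+j, i) · C(N+1, i+j+l+1), where C(a,b) denotes the binomial coefficient (equal to 0 when b > a, and terms with N−k−i < 0 contribute C(N−k−i,j) = 0). -/
open Finset

lemma choose_mul_choose_sub (n i j : ℕ) :
    n.choose i * (n - i).choose j = (i + j).choose i * n.choose (i + j) := by
  rcases le_or_gt (i + j) n with h | h
  · have := Nat.choose_mul (n := n) (k := i + j) (s := i) (Nat.le_add_right i j)
    rw [Nat.add_sub_cancel_left] at this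
    rw [← this, Nat.choose_symm_add, mul_comm]
  · rcases le_or_gt i n with hi | hi
    · have : n - i < j := by omega
      rw [Nat.choose_eq_zero_of_lt this, Nat.choose_eq_zero_of_lt h, mul_zero, mul_zero]
    · rw [Nat.choose_eq_zero_of_lt hi, Nat.choose_eq_zero_of_lt h, zero_mul, mul_zero]

lemma sum_choose_mul_choose (N l m : ℕ) :
    ∑ k ∈ range (N + 1), k.choose l * (N - k).choose m = (N + 1).choose (l + m + 1) := by
  induction N generalizing m with
  | zero =>
    simp only [Nat.zero_add, zero_add, range_one, sum_singleton, Nat.sub_self]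
    rcases l with _ | l
    · rcases m with _ | m
      · simp
      · rw [Nat.choose_zero_succ, mul_zero, Nat.choose_eq_zero_of_lt (by omega)]
    · rw [Nat.choose_zero_succ, zero_mul, Nat.choose_eq_zero_of_lt (by omega)]
  | succ N ih =>
    cases m with
    | zero =>
      simp only [Nat.choose_zero_right, mul_one]
      rw [Finset.sum_range_succ]
      have h0 : ∀ k ∈ range (N + 1), k.choose l = k.choose l * (N - k).choose 0 := by
        intro k _; simp
      rw [Finset.sum_congr rfl h0, ih 0, Nat.add_zero, Nat.add_comm ((N+1).choose (l+1)),
        ← Nat.choose_succ_succ']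
    | succ m =>
      rw [Finset.sum_range_succ]
      have h2 : ∀ k ∈ range (N + 1),
          k.choose l * (N + 1 - k).choose (m + 1)
            = k.choose l * (N - k).choose m + k.choose l * (N - k).choose (m + 1) := by
        intro k hk
        rw [mem_range] at hk
        have : N + 1 - k = (N - k) + 1 := by omega
        rw [this, Nat.choose_succ_succ', Nat.mul_add]
      rw [Finset.sum_congr rfl h2, Finset.sum_add_distrib, ih m, ih (m + 1),
        Nat.sub_self, Nat.choose_zero_succ, mul_zero, add_zero,
        show l + (m + 1) + 1 = (l + m + 1) + 1 from by omega, ← Nat.choose_succ_succ']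

/-- **Lemma (double sum).** For all natural numbers `N`, `i`, `j`, `l`:
`∑_{k=0}^{N} C(k,l) · C(N-k,i) · C(N-k-i,j) = C(i+j,i) · C(N+1, i+j+l+1)`.
(Here subtraction is truncated; a term in which `N-k-i` would be negative has
`C(N-k,i) = 0`, hence contributes `0`, matching the stated convention.) -/
theorem sum_choose_mul_choose_mul_choose (N i j l : ℕ) :
    ∑ k ∈ Finset.range (N + 1), k.choose l * (N - k).choose i * (N - k - i).choose j
      = (i + j).choose i * (N + 1).choose (i + j + l + 1) := by
  have h : ∀ k ∈ range (N + 1),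
      k.choose l * (N - k).choose i * (N - k - i).choose j
        = (i + j).choose i * (k.choose l * (N - k).choose (i + j)) := by
    intro k _
    rw [mul_assoc, choose_mul_choose_sub]
    ring
  rw [Finset.sum_congr rfl h, ← Finset.mul_sum, sum_choose_mul_choose]
  congr 2
  omega
end

section
/- For every integer n ≥ 1 and every integer t with 2 ≤ t ≤ n+1, P( D_{n,1} = t ) = ( (t−1)/(2n−t+1) ) · ( 2^{t−1} (n)_{t−1} / (2n)_{t−1} ), where (x)_m = x(x−1)⋯(x−m+1) denotes the falling factorial. -/
open Finset MeasureTheory ProbabilityTheory Filter Real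

/-- `dd k` = number of perfect matchings on `k` points: `(k-1)!!` for even `k`, `0` for odd. -/
def dd : ℕ → ℕ
  | 0 => 1
  | 1 => 0
  | (k+2) => (k+1) * dd k

lemma dd_two_mul_pos (m : ℕ) : 0 < dd (2*m) := by
  induction m with
  | zero => simp [dd]
  | succ m ih =>
      have : 2 * (m+1) = 2*m + 2 := by ring
      rw [this, dd]
      positivity

lemma two_pow_mul_factorial_mul_dd (m : ℕ) : 2^m * m.factorial * dd (2*m) = (2*m).factorial := by
  induction m with
  | zero => simp [dd]
  | succ m ih =>
      have h2 : 2 * (m+1) = 2*m + 2 := by ring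
      rw [h2, dd, Nat.factorial_succ, Nat.factorial_succ, Nat.factorial_succ]
      rw [pow_succ]
      calc 2 ^ m * 2 * ((m + 1) * m.factorial) * ((2*m + 1) * dd (2*m))
          = ((2*m+2) * ((2*m+1) * (2 ^ m * m.factorial * dd (2*m)))) := by ring
        _ = (2 * m + 1 + 1) * ((2 * m + 1) * (2 * m).factorial) := by rw [ih]

lemma key_nat (m j : ℕ) :
    ((j+1) * ((2*m+j).descFactorial j) * dd (2*m)) * ((2*m+j+1) * (2*m+2*j+2).descFactorial (j+1))
      = ((j+1) * 2^(j+1) * (m+j+1).descFactorial (j+1)) * dd (2*m+2*j+2) := by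
  have hc : 0 < 2^m * m.factorial := by positivity
  apply Nat.eq_of_mul_eq_mul_right hc
  have F1 : dd (2*m) * (2^m * m.factorial) = (2*m).factorial := by
    rw [← two_pow_mul_factorial_mul_dd m]; ring
  have F1' : dd (2*m+2*j+2) * (2^(m+j+1) * (m+j+1).factorial) = (2*m+2*j+2).factorial := by
    have := two_pow_mul_factorial_mul_dd (m+j+1)
    have h2 : 2*(m+j+1) = 2*m+2*j+2 := by ring
    rw [h2] at this
    rw [← this]; ring
  have hsucc : (2*m+2*j+2).descFactorial (j+2) = (2*m+j+1) * (2*m+2*j+2).descFactorial (j+1) := by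
    have := Nat.descFactorial_succ (2*m+2*j+2) (j+1)
    rw [this]
    congr 1
    omega
  have hcomp : (2*m+j).descFactorial j * (2*m+2*j+2).descFactorial (j+2)
      = (2*m+2*j+2).descFactorial (2*j+2) := by
    have := Nat.descFactorial_mul_descFactorial (k := j+2) (m := 2*j+2) (n := 2*m+2*j+2) (by omega)
    rw [← this]
    congr 2 <;> omega
  have hfm : (2*m).factorial * (2*m+2*j+2).descFactorial (2*j+2) = (2*m+2*j+2).factorial := by
    have h := Nat.factorial_mul_descFactorial (n := 2*m+2*j+2) (k := 2*j+2) (by omega)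
    have hs : 2*m+2*j+2 - (2*j+2) = 2*m := by omega
    rw [hs] at h
    exact h
  have hfn : m.factorial * (m+j+1).descFactorial (j+1) = (m+j+1).factorial := by
    have h := Nat.factorial_mul_descFactorial (n := m+j+1) (k := j+1) (by omega)
    have hs : m+j+1 - (j+1) = m := by omega
    rw [hs] at h
    exact h
  calc (j+1) * ((2*m+j).descFactorial j) * dd (2*m) * ((2*m+j+1) * (2*m+2*j+2).descFactorial (j+1)) * (2^m * m.factorial)
      = (j+1) * ((2*m+j).descFactorial j * ((2*m+j+1) * (2*m+2*j+2).descFactorial (j+1))) * (dd (2*m) * (2^m * m.factorial)) := by ring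
    _ = (j+1) * ((2*m+j).descFactorial j * (2*m+2*j+2).descFactorial (j+2)) * (2*m).factorial := by rw [F1, hsucc]
    _ = (j+1) * ((2*m).factorial * (2*m+2*j+2).descFactorial (2*j+2)) := by rw [hcomp]; ring
    _ = (j+1) * (2*m+2*j+2).factorial := by rw [hfm]
    _ = (j+1) * (m.factorial * (m+j+1).descFactorial (j+1)) * 2^(j+1) * 2^m * dd (2*m+2*j+2) := by
        rw [hfn, ← F1', pow_add]
        ring
    _ = (j+1) * 2^(j+1) * (m+j+1).descFactorial (j+1) * dd (2*m+2*j+2) * (2^m * m.factorial) := by ring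

open Finset

variable {α : Type*} [Fintype α] [DecidableEq α]

/-- Matchings of `s` (involutions fixing the complement, fixed-point-free on `s`)
with the extra constraint that points of `A` are matched outside of `A`. -/
def MG (A s : Finset α) : Finset (α → α) :=
  univ.filter (fun f => (∀ x, f (f x) = x) ∧ (∀ x ∈ s, f x ∈ s ∧ f x ≠ x) ∧
    (∀ x, x ∉ s → f x = x) ∧ (∀ x ∈ A, f x ∉ A))

lemma mem_MG {A s : Finset α} {f : α → α} :
    f ∈ MG A s ↔ (∀ x, f (f x) = x) ∧ (∀ x ∈ s, f x ∈ s ∧ f x ≠ x) ∧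
      (∀ x, x ∉ s → f x = x) ∧ (∀ x ∈ A, f x ∉ A) := by
  simp [MG]

/-- transpose `a b` composed with `f` outside `{a,b}`. -/
def phiAB (a b : α) (f : α → α) : α → α := fun x => if x = a then b else if x = b then a else f x

lemma split_card (s A T : Finset α) (a : α) (ha : a ∈ s) (hT : T ⊆ s.erase a)
    (hA : A ⊆ s.erase a) :
    ((MG ∅ s).filter (fun f => f a ∈ T ∧ ∀ x ∈ A, x ≠ f a → f x ∉ insert a A)).card
      = ∑ b ∈ T, (MG (A.erase b) ((s.erase a).erase b)).card := by
  classical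
  have haA : a ∉ A := fun h => (Finset.mem_erase.mp (hA h)).1 rfl
  have hset : ((MG ∅ s).filter (fun f => f a ∈ T ∧ ∀ x ∈ A, x ≠ f a → f x ∉ insert a A))
      = T.biUnion (fun b => (MG (A.erase b) ((s.erase a).erase b)).image (phiAB a b)) := by
    ext f
    simp only [Finset.mem_filter, Finset.mem_biUnion, Finset.mem_image]
    constructor
    · rintro ⟨hfM, hbT, hcond⟩
      rw [mem_MG] at hfM
      obtain ⟨h1, h2, h3, -⟩ := hfM
      set b := f a with hb
      have hbs : b ∈ s := (h2 a ha).1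
      have hba : b ≠ a := (h2 a ha).2
      have hfb : f b = a := h1 a
      refine ⟨b, hbT, fun x => if x = a then a else if x = b then b else f x, ?_, ?_⟩
      · rw [mem_MG]
        refine ⟨?_, ?_, ?_, ?_⟩
        · intro x
          by_cases hxa : x = a
          · simp [hxa]
          by_cases hxb : x = b
          · simp [hxb, hba]
          · have hfxa : f x ≠ a := fun h => hxb (((h1 x).symm.trans (congrArg f h)).trans hb.symm)
            have hfxb : f x ≠ b := fun h => hxa (((h1 x).symm.trans (congrArg f h)).trans hfb)
            simp only [if_neg hxa, if_neg hxb, if_neg hfxa, if_neg hfxb]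
            exact h1 x
        · intro x hx
          rw [Finset.mem_erase, Finset.mem_erase] at hx
          obtain ⟨hxb, hxa, hxs⟩ := hx
          have hfxa : f x ≠ a := fun h => hxb (((h1 x).symm.trans (congrArg f h)).trans hb.symm)
          have hfxb : f x ≠ b := fun h => hxa (((h1 x).symm.trans (congrArg f h)).trans hfb)
          simp only [if_neg hxa, if_neg hxb]
          constructor
          · rw [Finset.mem_erase, Finset.mem_erase]
            exact ⟨hfxb, hfxa, (h2 x hxs).1⟩
          · exact (h2 x hxs).2
        · intro x hx
          by_cases hxa : x = a
          · rw [if_pos hxa]; exact hxa.symm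
          by_cases hxb : x = b
          · rw [if_neg hxa, if_pos hxb]; exact hxb.symm
          · have hxs : x ∉ s := by
              intro hxs
              exact hx (by rw [Finset.mem_erase, Finset.mem_erase]; exact ⟨hxb, hxa, hxs⟩)
            simp only [if_neg hxa, if_neg hxb]
            exact h3 x hxs
        · intro x hx
          rw [Finset.mem_erase] at hx
          obtain ⟨hxb, hxA⟩ := hx
          have hxa : x ≠ a := fun h => haA (h ▸ hxA)
          have := hcond x hxA hxb
          simp only [if_neg hxa, if_neg hxb]
          intro hmem
          rw [Finset.mem_erase] at hmem
          exact this (Finset.mem_insert_of_mem hmem.2)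
      · funext x
        by_cases hxa : x = a
        · simp [phiAB, hxa, hb]
        by_cases hxb : x = b
        · simp [phiAB, hxb, hba, hfb]
        · simp [phiAB, hxa, hxb]
    · rintro ⟨b, hbT, g, hg, hfg⟩
      rw [mem_MG] at hg
      obtain ⟨g1, g2, g3, g4⟩ := hg
      have hbsa : b ∈ s.erase a := hT hbT
      rw [Finset.mem_erase] at hbsa
      obtain ⟨hba, hbs⟩ := hbsa
      have hanotin : a ∉ (s.erase a).erase b := by simp
      have hbnotin : b ∉ (s.erase a).erase b := by simp
      have hga : g a = a := g3 a hanotin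
      have hgb : g b = b := g3 b hbnotin
      -- facts about g on other points
      have hgmem : ∀ x, x ≠ a → x ≠ b → x ∈ s → g x ∈ s ∧ g x ≠ a ∧ g x ≠ b ∧ g x ≠ x := by
        intro x hxa hxb hxs
        have hx' : x ∈ (s.erase a).erase b := by
          rw [Finset.mem_erase, Finset.mem_erase]; exact ⟨hxb, hxa, hxs⟩
        obtain ⟨hm, hne⟩ := g2 x hx'
        rw [Finset.mem_erase, Finset.mem_erase] at hm
        exact ⟨hm.2.2, hm.2.1, hm.1, hne⟩
      have hgfix : ∀ x, x ≠ a → x ≠ b → x ∉ s → g x = x := by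
        intro x hxa hxb hxs
        exact g3 x (fun h => hxs (by
          rw [Finset.mem_erase, Finset.mem_erase] at h; exact h.2.2))
      subst hfg
      refine ⟨?_, ?_, ?_⟩
      · rw [mem_MG]
        refine ⟨?_, ?_, ?_, by simp⟩
        · intro x
          by_cases hxa : x = a
          · simp [phiAB, hxa, hba]
          by_cases hxb : x = b
          · simp [phiAB, hxb, hba]
          · have hout : g x ≠ a ∧ g x ≠ b := by
              by_cases hxs : x ∈ s
              · obtain ⟨-, h2', h3', -⟩ := hgmem x hxa hxb hxs
                exact ⟨h2', h3'⟩
              · rw [hgfix x hxa hxb hxs]; exact ⟨hxa, hxb⟩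
            simp only [phiAB, if_neg hxa, if_neg hxb, if_neg hout.1, if_neg hout.2]
            exact g1 x
        · intro x hxs
          by_cases hxa : x = a
          · subst hxa
            simp only [phiAB, if_pos rfl]
            exact ⟨hbs, hba⟩
          by_cases hxb : x = b
          · subst hxb
            simp only [phiAB, if_neg hxa, if_pos rfl]
            exact ⟨ha, fun h => hba h.symm⟩
          · obtain ⟨h1', -, -, h4'⟩ := hgmem x hxa hxb hxs
            simp only [phiAB, if_neg hxa, if_neg hxb]
            exact ⟨h1', h4'⟩
        · intro x hxs
          have hxa : x ≠ a := fun h => hxs (h ▸ ha)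
          have hxb : x ≠ b := fun h => hxs (h ▸ hbs)
          simp only [phiAB, if_neg hxa, if_neg hxb]
          exact hgfix x hxa hxb hxs
      · simp [phiAB, hbT]
      · intro x hxA hxfa
        have hfa : phiAB a b g a = b := by simp [phiAB]
        rw [hfa] at hxfa
        have hxa : x ≠ a := fun h => haA (h ▸ hxA)
        have hxsa : x ∈ s.erase a := hA hxA
        rw [Finset.mem_erase] at hxsa
        have hxs' : x ∈ (s.erase a).erase b := by
          rw [Finset.mem_erase]; exact ⟨hxfa, hA hxA⟩
        obtain ⟨hm, -⟩ := g2 x hxs'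
        rw [Finset.mem_erase, Finset.mem_erase] at hm
        have hgxA : g x ∉ A.erase b := g4 x (Finset.mem_erase.mpr ⟨hxfa, hxA⟩)
        simp only [phiAB, if_neg hxa, if_neg hxfa]
        intro hmem
        rcases Finset.mem_insert.mp hmem with h | h
        · exact hm.2.1 h
        · exact hgxA (Finset.mem_erase.mpr ⟨hm.1, h⟩)
  have hdisj : ∀ b1 ∈ T, ∀ b2 ∈ T, b1 ≠ b2 →
      Disjoint ((MG (A.erase b1) ((s.erase a).erase b1)).image (phiAB a b1))
        ((MG (A.erase b2) ((s.erase a).erase b2)).image (phiAB a b2)) := by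
    intro b1 h1 b2 h2 hne
    rw [Finset.disjoint_left]
    rintro f hf1 hf2
    rw [Finset.mem_image] at hf1 hf2
    obtain ⟨g1, -, rfl⟩ := hf1
    obtain ⟨g2, -, heq⟩ := hf2
    have := congrFun heq a
    simp only [phiAB, if_pos rfl] at this
    exact hne this.symm
  rw [hset, Finset.card_biUnion hdisj]
  refine Finset.sum_congr rfl (fun b hbT => ?_)
  apply Finset.card_image_of_injOn
  intro g1 hg1 g2 hg2 heq
  rw [Finset.mem_coe, mem_MG] at hg1 hg2
  have hbsa := hT hbT
  rw [Finset.mem_erase] at hbsa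
  funext x
  by_cases hxa : x = a
  · rw [hxa, hg1.2.2.1 a (by simp), hg2.2.2.1 a (by simp)]
  by_cases hxb : x = b
  · rw [hxb, hg1.2.2.1 b (by simp), hg2.2.2.1 b (by simp)]
  · have := congrFun heq x
    simpa [phiAB, hxa, hxb] using this

lemma dd_step (c : ℕ) (hc : 1 ≤ c) : (c - 1) * dd (c - 2) = dd c := by
  match c with
  | 1 => simp [dd]
  | (k+2) => simp only [Nat.add_sub_cancel, dd]; norm_num

lemma arith_step (c k : ℕ) (hk : 1 ≤ k) :
    (c - k) * ((c - 2 - (k-1)).descFactorial (k-1) * dd (c - 2 - 2*(k-1)))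
      = (c - k).descFactorial k * dd (c - 2*k) := by
  have hdd : c - 2 - 2*(k-1) = c - 2*k := by omega
  rw [hdd]
  rcases Nat.eq_zero_or_pos (c - k) with h | h
  · rw [h]
    obtain ⟨k', rfl⟩ := Nat.exists_eq_add_of_le hk
    simp [Nat.descFactorial]
  · obtain ⟨m, hm⟩ : ∃ m, c - k = m + 1 := ⟨c - k - 1, by omega⟩
    obtain ⟨k', rfl⟩ := Nat.exists_eq_add_of_le hk
    have h2 : c - 2 - (1 + k' - 1) = m := by omega
    rw [hm, h2]
    have h3 : 1 + k' - 1 = k' := by omega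
    rw [h3, show 1 + k' = k' + 1 by omega, Nat.succ_descFactorial_succ]
    ring

lemma MG_card_eq (A s : Finset α) (a : α) (haA : a ∈ A) (hAs : A ⊆ s) :
    (MG A s).card = ∑ b ∈ s \ A, (MG ((A.erase a).erase b) ((s.erase a).erase b)).card := by
  classical
  have has : a ∈ s := hAs haA
  have hT : s \ A ⊆ s.erase a := by
    intro x hx
    rw [Finset.mem_sdiff] at hx
    exact Finset.mem_erase.mpr ⟨fun h => hx.2 (h ▸ haA), hx.1⟩
  have hA' : A.erase a ⊆ s.erase a := Finset.erase_subset_erase a hAs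
  rw [← split_card s (A.erase a) (s \ A) a has hT hA']
  congr 1
  ext f
  rw [mem_MG, Finset.mem_filter, mem_MG, Finset.insert_erase haA]
  constructor
  · rintro ⟨h1, h2, h3, h4⟩
    refine ⟨⟨h1, h2, h3, by simp⟩, ?_, ?_⟩
    · rw [Finset.mem_sdiff]
      exact ⟨(h2 a has).1, h4 a haA⟩
    · intro x hx _
      exact h4 x (Finset.mem_of_mem_erase hx)
  · rintro ⟨⟨h1, h2, h3, -⟩, h5, h6⟩
    refine ⟨h1, h2, h3, ?_⟩
    intro x hx
    by_cases hxa : x = a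
    · subst hxa
      exact (Finset.mem_sdiff.mp h5).2
    · have hxe : x ∈ A.erase a := Finset.mem_erase.mpr ⟨hxa, hx⟩
      have hxfa : x ≠ f a := by
        intro h
        rw [h] at hx
        exact (Finset.mem_sdiff.mp h5).2 hx
      exact h6 x hxe hxfa

lemma MG_empty_eq_singleton (s : Finset α) (a : α) (ha : a ∈ s) :
    MG (∅ : Finset α) s = MG {a} s := by
  ext f
  rw [mem_MG, mem_MG]
  constructor
  · rintro ⟨h1, h2, h3, -⟩
    refine ⟨h1, h2, h3, ?_⟩
    intro x hx
    rw [Finset.mem_singleton] at hx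
    subst hx
    rw [Finset.mem_singleton]
    exact (h2 x ha).2
  · rintro ⟨h1, h2, h3, -⟩
    exact ⟨h1, h2, h3, by simp⟩

lemma MG_step (s A : Finset α) (a : α) (haA : a ∈ A) (hAs : A ⊆ s)
    (ih : ∀ s' A' : Finset α, A' ⊆ s' → s'.card + 2 = s.card →
      (MG A' s').card = (s'.card - A'.card).descFactorial A'.card * dd (s'.card - 2 * A'.card)) :
    (MG A s).card = (s.card - A.card).descFactorial A.card * dd (s.card - 2 * A.card) := by
  classical
  rw [MG_card_eq A s a haA hAs]
  have has : a ∈ s := hAs haA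
  have hsum : ∀ b ∈ s \ A, (MG ((A.erase a).erase b) ((s.erase a).erase b)).card
      = (s.card - 2 - (A.card - 1)).descFactorial (A.card - 1) * dd (s.card - 2 - 2*(A.card-1)) := by
    intro b hb
    rw [Finset.mem_sdiff] at hb
    have hba : b ≠ a := fun h => hb.2 (h ▸ haA)
    have hbe : b ∈ s.erase a := Finset.mem_erase.mpr ⟨hba, hb.1⟩
    have hAb : (A.erase a).erase b = A.erase a := Finset.erase_eq_of_notMem
      (fun h => hb.2 (Finset.mem_of_mem_erase h))
    have hsub : A.erase a ⊆ (s.erase a).erase b := by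
      intro x hx
      rw [Finset.mem_erase] at hx ⊢
      exact ⟨fun h => hb.2 (h ▸ hx.2), Finset.mem_erase.mpr ⟨hx.1, hAs hx.2⟩⟩
    have hc1 : (s.erase a).card = s.card - 1 := Finset.card_erase_of_mem has
    have hc2 : ((s.erase a).erase b).card = (s.erase a).card - 1 := Finset.card_erase_of_mem hbe
    have hcs : 1 ≤ s.card := Finset.card_pos.mpr ⟨a, has⟩
    have hcs2 : 1 ≤ (s.erase a).card := Finset.card_pos.mpr ⟨b, hbe⟩
    have hcard : ((s.erase a).erase b).card + 2 = s.card := by omega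
    have e2 : (A.erase a).card = A.card - 1 := Finset.card_erase_of_mem haA
    have e1 : ((s.erase a).erase b).card = s.card - 2 := by omega
    rw [hAb, ih _ _ hsub hcard, e1, e2]
  rw [Finset.sum_congr rfl hsum, Finset.sum_const, Finset.card_sdiff_of_subset hAs, smul_eq_mul]
  exact arith_step s.card A.card (Nat.one_le_iff_ne_zero.mpr
    (fun h => by simp [Finset.card_eq_zero.mp h] at haA)) 

lemma MG_card_formula (N : ℕ) : ∀ (s A : Finset α), A ⊆ s → s.card = N →
    (MG A s).card = (s.card - A.card).descFactorial A.card * dd (s.card - 2 * A.card) := by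
  induction N using Nat.strong_induction_on with
  | _ N ih =>
    intro s A hAs hN
    rcases A.eq_empty_or_nonempty with rfl | ⟨a, haA⟩
    · rcases s.eq_empty_or_nonempty with rfl | ⟨a, has⟩
      · have : MG (∅ : Finset α) (∅ : Finset α) = {id} := by
          ext f
          rw [mem_MG, Finset.mem_singleton]
          constructor
          · rintro ⟨-, -, h3, -⟩
            funext x
            exact h3 x (by simp)
          · rintro rfl
            simp
        simp [this, dd]
      · have hcs : 1 ≤ s.card := Finset.card_pos.mpr ⟨a, has⟩
        rw [MG_empty_eq_singleton s a has]
        rw [MG_step s {a} a (Finset.mem_singleton_self a) (by simpa)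
          (fun s' A' h1 h2 => ih s'.card (by omega) s' A' h1 rfl)]
        simp only [Finset.card_singleton, Finset.card_empty, Nat.descFactorial_one,
          Nat.descFactorial_zero, Nat.mul_one, Nat.sub_zero, one_mul, Nat.mul_zero]
        exact dd_step s.card hcs
    · subst hN
      exact MG_step s A a haA hAs
        (fun s' A' h1 h2 => ih s'.card (by omega) s' A' h1 rfl)

section Assembly

lemma descFactorial_pos' {k n : ℕ} (h : k ≤ n) : 0 < n.descFactorial k := by
  rcases Nat.eq_zero_or_pos (n.descFactorial k) with h0 | h0
  · rw [Nat.descFactorial_eq_zero_iff_lt] at h0; omega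
  · exact h0

lemma card_matchings_filter (n : ℕ) (Q : (Fin (2*n) → Fin (2*n)) → Prop)
    [DecidablePred Q]
    [DecidablePred (fun M : Equiv.Perm (Fin (2*n)) => Q (fun x => M x))] :
    ((Matchings n).filter (fun M => Q (fun x => M x))).card
      = ((MG ∅ (Finset.univ : Finset (Fin (2*n)))).filter Q).card := by
  apply Finset.card_bij (fun (M : Equiv.Perm (Fin (2*n))) _ => (fun x => M x))
  · intro M hM
    rw [Finset.mem_filter] at hM ⊢
    obtain ⟨hM1, hQ⟩ := hM
    rw [Matchings, Finset.mem_filter] at hM1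
    obtain ⟨-, h1, h2⟩ := hM1
    exact ⟨mem_MG.mpr ⟨h1, fun x _ => ⟨Finset.mem_univ _, h2 x⟩,
      fun x hx => absurd (Finset.mem_univ x) hx, by simp⟩, hQ⟩
  · intro M1 h1 M2 h2 heq
    exact Equiv.ext (fun x => congrFun heq x)
  · intro f hf
    rw [Finset.mem_filter, mem_MG] at hf
    obtain ⟨⟨h1, h2, -, -⟩, hQ⟩ := hf
    have hinv : Function.Involutive f := h1
    refine ⟨hinv.toPerm f, ?_, by funext x; rw [Function.Involutive.coe_toPerm]⟩
    rw [Finset.mem_filter, Matchings, Finset.mem_filter]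
    simp only [Function.Involutive.coe_toPerm]
    exact ⟨⟨Finset.mem_univ _, h1, fun p => (h2 p (Finset.mem_univ p)).2⟩, hQ⟩

lemma matchings_card (n : ℕ) : (Matchings n).card = dd (2*n) := by
  classical
  have h := card_matchings_filter n (fun _ => True)
  simp only [Finset.filter_true] at h
  rw [h, MG_card_formula (Finset.univ : Finset (Fin (2*n))).card _ _ (Finset.empty_subset _) rfl]
  simp

lemma D_one_char (n t : ℕ) (ht : 2 ≤ t) (M : Equiv.Perm (Fin (2*n))) :
    D n M 1 = t ↔ ((∀ q ∈ rightEndpoints n M, t - 1 ≤ (q:ℕ)) ∧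
      ∃ q ∈ rightEndpoints n M, (q:ℕ) = t-1) := by
  rcases h : (rightEndpoints n M).sort (·≤·) with _ | ⟨p, rest⟩
  · have hD : D n M 1 = 0 := by simp [D, rePos, h]
    rw [hD]
    constructor
    · intro h0; omega
    · rintro ⟨-, q, hq, -⟩
      have : q ∈ (rightEndpoints n M).sort (·≤·) := (Finset.mem_sort (·≤·)).mpr hq
      rw [h] at this
      exact absurd this List.not_mem_nil
  · have hD : D n M 1 = (p:ℕ) + 1 := by simp [D, rePos, h]
    rw [hD]
    have hpR : p ∈ rightEndpoints n M := by
      have : p ∈ (rightEndpoints n M).sort (·≤·) := by rw [h]; exact List.mem_cons_self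
      exact (Finset.mem_sort (·≤·)).mp this
    have hmin : ∀ q ∈ rightEndpoints n M, (p:ℕ) ≤ (q:ℕ) := by
      intro q hq
      have hq' : q ∈ p :: rest := by
        rw [← h]; exact (Finset.mem_sort (·≤·)).mpr hq
      rcases List.mem_cons.mp hq' with rfl | hq''
      · exact le_refl _
      · have hs := Finset.pairwise_sort (r := (·≤·)) (s := rightEndpoints n M)
        rw [h] at hs
        exact List.rel_of_pairwise_cons hs hq''
    constructor
    · intro ht'
      refine ⟨fun q hq => ?_, p, hpR, by omega⟩
      have := hmin q hq
      omega
    · rintro ⟨hlb, q, hq, hqval⟩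
      have h1 : (p:ℕ) ≤ (q:ℕ) := hmin q hq
      have h2 : t - 1 ≤ (p:ℕ) := hlb p hpR
      omega

end Assembly

/-- **Proposition.** For `n ≥ 1` and `2 ≤ t ≤ n+1`,
`P(D_{n,1} = t) = ((t−1)/(2n−t+1)) · (2^{t−1}(n)_{t−1}/(2n)_{t−1})`. -/
theorem prob_first_block_eq (n t : ℕ) (hn : 1 ≤ n) (ht : 2 ≤ t) (ht' : t ≤ n + 1) :
    Pr n (fun M => D n M 1 = t)
      = (((t : ℝ) - 1) / (2 * (n : ℝ) - t + 1))
        * (2 ^ (t - 1) * (n.descFactorial (t - 1) : ℝ)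
            / ((2 * n).descFactorial (t - 1) : ℝ)) := by
  have ha2 : t - 1 < 2 * n := by omega
  have h21 : 2*n - 1 - 1 = 2*n - 2 := by omega
  have h22 : t - 1 - 1 = t - 2 := by omega
  have e1 : 2*n - 2 - (t-2) = 2*n - t := by omega
  have e2 : 2*n - 2 - 2*(t-2) = 2*(n+1-t) := by omega
  have eK1 : 2*(n+1-t)+(t-2) = 2*n - t := by omega
  have eK3 : (t-2)+1 = t-1 := by omega
  have eK5 : 2*(n+1-t)+2*(t-2)+2 = 2*n := by omega
  have eK6 : (n+1-t)+(t-2)+1 = n := by omega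
  have h2nt : t ≤ 2*n := by omega
  have h1t : 1 ≤ t := by omega
  have hne1 : 2*n - t + 1 ≠ 0 := by omega
  have ht12n : t - 1 ≤ 2*n := by omega
  obtain ⟨a, hav⟩ : ∃ a : Fin (2*n), (a:ℕ) = t - 1 := ⟨⟨t-1, ha2⟩, rfl⟩
  have hRmem : ∀ (M : Equiv.Perm (Fin (2*n))) (q : Fin (2*n)),
      q ∈ rightEndpoints n M ↔ M q < q := by
    intro M q
    rw [rightEndpoints, Finset.mem_filter]
    simp
  have hiff : ∀ M ∈ Matchings n, (D n M 1 = t ↔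
      (M a ∈ Finset.Iio a ∧ ∀ x ∈ Finset.Iio a, x ≠ M a → M x ∉ insert a (Finset.Iio a))) := by
    intro M hM
    rw [Matchings, Finset.mem_filter] at hM
    obtain ⟨-, hinv, hfpf⟩ := hM
    rw [D_one_char n t ht M]
    constructor
    · rintro ⟨hlb, q, hq, hqv⟩
      have hqa : q = a := Fin.ext (by rw [hqv, hav])
      rw [hqa] at hq
      have hMa : M a < a := (hRmem M a).mp hq
      refine ⟨Finset.mem_Iio.mpr hMa, ?_⟩
      intro x hx hxMa
      rw [Finset.mem_Iio] at hx
      rw [Finset.mem_insert, Finset.mem_Iio]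
      rintro (hxa | hxP)
      · exact hxMa (by rw [← hinv x, hxa])
      · rcases lt_trichotomy (M x) x with hlt | heq | hgt
        · have hxR : x ∈ rightEndpoints n M := (hRmem M x).mpr hlt
          have h1 := hlb x hxR
          have hxv : (x:ℕ) < t-1 := by rw [← hav]; exact Fin.lt_def.mp hx
          omega
        · exact hfpf x heq
        · have hMxR : M x ∈ rightEndpoints n M := (hRmem M (M x)).mpr (by rw [hinv x]; exact hgt)
          have h1 := hlb (M x) hMxR
          have h2 : (M x : ℕ) < (a:ℕ) := Fin.lt_def.mp hxP
          rw [hav] at h2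
          omega
    · rintro ⟨h5, h6⟩
      have hMa : M a < a := Finset.mem_Iio.mp h5
      refine ⟨?_, a, (hRmem M a).mpr hMa, hav⟩
      intro q hq
      have hq' : M q < q := (hRmem M q).mp hq
      by_contra hcon
      push_neg at hcon
      have hqa : q < a := Fin.lt_def.mpr (by rw [hav]; omega)
      have hqP : q ∈ Finset.Iio a := Finset.mem_Iio.mpr hqa
      by_cases hqMa : q = M a
      · rw [hqMa, hinv a] at hq'
        exact absurd hq' (not_lt.mpr (le_of_lt hMa))
      · exact (h6 q hqP hqMa)
          (Finset.mem_insert_of_mem (Finset.mem_Iio.mpr (lt_trans hq' hqa)))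
  have hfilter : (Matchings n).filter (fun M => D n M 1 = t)
      = (Matchings n).filter (fun M =>
          (fun x => M x) a ∈ Finset.Iio a ∧
            ∀ x ∈ Finset.Iio a, x ≠ (fun x => M x) a →
              (fun x => M x) x ∉ insert a (Finset.Iio a)) :=
    Finset.filter_congr (fun M hM => by simpa using hiff M hM)
  have hT : Finset.Iio a ⊆ Finset.univ.erase a := fun x hx =>
    Finset.mem_erase.mpr ⟨ne_of_lt (Finset.mem_Iio.mp hx), Finset.mem_univ x⟩
  have hsummand : ∀ b ∈ Finset.Iio a,
      (MG ((Finset.Iio a).erase b) ((Finset.univ.erase a).erase b)).card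
        = (2*n - t).descFactorial (t-2) * dd (2*(n+1-t)) := by
    intro b hb
    have hba : b ≠ a := ne_of_lt (Finset.mem_Iio.mp hb)
    have hsub : (Finset.Iio a).erase b ⊆ (Finset.univ.erase a).erase b := by
      intro x hx
      rw [Finset.mem_erase] at hx ⊢
      exact ⟨hx.1, Finset.mem_erase.mpr ⟨ne_of_lt (Finset.mem_Iio.mp hx.2), Finset.mem_univ x⟩⟩
    rw [MG_card_formula (((Finset.univ.erase a).erase b).card) _ _ hsub rfl]
    have c1 : (Finset.univ : Finset (Fin (2*n))).card = 2*n := by simp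
    have c2 : (Finset.univ.erase a).card = 2*n - 1 := by
      rw [Finset.card_erase_of_mem (Finset.mem_univ a), c1]
    have c3 : ((Finset.univ.erase a).erase b).card = 2*n - 2 := by
      rw [Finset.card_erase_of_mem (Finset.mem_erase.mpr ⟨hba, Finset.mem_univ b⟩), c2, h21]
    have c4 : (Finset.Iio a).card = t - 1 := by rw [Fin.card_Iio, hav]
    have c5 : ((Finset.Iio a).erase b).card = t - 2 := by
      rw [Finset.card_erase_of_mem hb, c4, h22]
    rw [c3, c5, e1, e2]
  have hsplit := split_card (Finset.univ : Finset (Fin (2*n))) (Finset.Iio a) (Finset.Iio a) a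
    (Finset.mem_univ a) hT hT
  have hQcard := card_matchings_filter n (fun f =>
    f a ∈ Finset.Iio a ∧ ∀ x ∈ Finset.Iio a, x ≠ f a → f x ∉ insert a (Finset.Iio a))
  have hcount : ((Matchings n).filter (fun M => D n M 1 = t)).card
      = (t-1) * ((2*n-t).descFactorial (t-2) * dd (2*(n+1-t))) := by
    have hsum : ∑ b ∈ Finset.Iio a,
        (MG ((Finset.Iio a).erase b) ((Finset.univ.erase a).erase b)).card
          = (t-1) * ((2*n-t).descFactorial (t-2) * dd (2*(n+1-t))) := by
      rw [Finset.sum_congr rfl hsummand, Finset.sum_const, Fin.card_Iio, hav, smul_eq_mul]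
    rw [hfilter, hQcard]
    convert hsplit.trans hsum using 2
    ext f
    simp only [Finset.mem_filter]
  have htot := matchings_card n
  unfold Pr
  rw [Finset.filter_congr_decidable, hcount, htot]
  -- the key identity, instantiated
  have k := key_nat (n+1-t) (t-2)
  rw [eK1, eK3, eK5, eK6] at k
  have hdd : (0:ℝ) < (dd (2*n) : ℝ) := by exact_mod_cast dd_two_mul_pos n
  have hcast : ((2*n - t + 1 : ℕ) : ℝ) = 2*(n:ℝ) - t + 1 := by
    push_cast [Nat.cast_sub h2nt]
    ring
  have hden : (2*(n:ℝ) - t + 1) * ((2*n).descFactorial (t-1) : ℝ) ≠ 0 := by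
    apply mul_ne_zero
    · rw [← hcast]
      exact Nat.cast_ne_zero.mpr hne1
    · exact Nat.cast_ne_zero.mpr (descFactorial_pos' ht12n).ne'
  rw [div_mul_div_comm, div_eq_div_iff hdd.ne' hden]
  have kR : (((t-1 : ℕ):ℝ) * ((2*n-t).descFactorial (t-2) : ℝ) * (dd (2*(n+1-t)) : ℝ))
        * (((2*n-t+1 : ℕ):ℝ) * ((2*n).descFactorial (t-1) : ℝ))
      = (((t-1:ℕ):ℝ) * ((2^(t-1) : ℕ):ℝ) * ((n.descFactorial (t-1)):ℝ)) * (dd (2*n) : ℝ) := by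
    exact_mod_cast k
  push_cast [Nat.cast_sub h2nt, Nat.cast_sub h1t] at kR ⊢
  linear_combination kR
end
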